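/- arXiv:2202.10723 — 7 statements merged into one kernel-verified Lean document; each statement's English description precedes it below -/
import Mathlib

section
/- Let X and Y be measurable spaces, let λ be a finite nonnegative measure on Y, let A ⊆ X × Y be a measurable set, and let 1 ≤ p < ∞ with conjugate exponent p′ ∈ (1, ∞] satisfying 1/p + 1/p′ = 1 (p′ = ∞ when p = 1, the L^∞ norm being the λ-essential supremum). For a measurable function h : Y → ℝ with ‖h‖_{L^{p′}(Y, λ)} ≤ 1, define f_h(x) := ∫_Y 1_A(x, y) h(y) λ(dy). Then for all Borel probability measures μ, ν on X, sup { ∫_X f_h dμ − ∫_X f_h dν : h measurable, ‖h‖_{L^{p′}(Y, λ)} ≤ 1 } = ( ∫_Y | μ(A_y) − ν(A_y) |^p λ(dy) )^{1/p}, where A_y := { x ∈ X : (x, y) ∈ A }. -/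
open MeasureTheory ENNReal

section Aux

variable {X Y : Type*} [MeasurableSpace X] [MeasurableSpace Y]

lemma fubini_indicator_aux (lam : Measure Y) [IsFiniteMeasure lam]
    (A : Set (X × Y)) (hA : MeasurableSet A)
    (μ : Measure X) [IsProbabilityMeasure μ] (h : Y → ℝ)
    (hint : Integrable h lam) :
    ∫ x, ∫ y, ({y : Y | (x, y) ∈ A}.indicator h) y ∂lam ∂μ
      = ∫ y, h y * (μ {x : X | (x, y) ∈ A}).toReal ∂lam := by
  have hF : Integrable (fun z : X × Y => A.indicator (fun z : X × Y => h z.2) z) (μ.prod lam) := by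
    have h1 : Integrable (fun z : X × Y => h z.2) (μ.prod lam) := by
      have := (integrable_const (1:ℝ) (μ := μ)).mul_prod hint
      simpa using this
    exact h1.indicator hA
  have heq : ∀ x y, ({y : Y | (x, y) ∈ A}.indicator h) y
      = A.indicator (fun z : X × Y => h z.2) (x, y) := by
    intro x y; by_cases hxy : (x, y) ∈ A <;> simp [Set.indicator_apply, hxy]
  have hswap := integral_integral_swap (f := fun x y => A.indicator (fun z : X × Y => h z.2) (x, y))
    (μ := μ) (ν := lam) hF
  calc ∫ x, ∫ y, ({y : Y | (x, y) ∈ A}.indicator h) y ∂lam ∂μ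
      = ∫ x, ∫ y, A.indicator (fun z : X × Y => h z.2) (x, y) ∂lam ∂μ := by
        simp_rw [heq]
    _ = ∫ y, ∫ x, A.indicator (fun z : X × Y => h z.2) (x, y) ∂μ ∂lam := hswap
    _ = ∫ y, h y * (μ {x : X | (x, y) ∈ A}).toReal ∂lam := by
        refine integral_congr_ae (Filter.Eventually.of_forall fun y => ?_)
        have : ∀ x, A.indicator (fun z : X × Y => h z.2) (x, y)
            = ({x : X | (x, y) ∈ A}).indicator (fun _ => h y) x := by
          intro x; by_cases hxy : (x, y) ∈ A <;> simp [Set.indicator_apply, hxy]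
        simp_rw [this]
        rw [integral_indicator_const]
        · rw [smul_eq_mul, mul_comm, measureReal_def]
        · exact measurable_prodMk_right hA

end Aux

/-- Closed-form formula (abstract form): the supremum of `∫ f_h dμ - ∫ f_h dν` over measurable
`h` with `‖h‖_{L^{p'}} ≤ 1`, where `f_h x = ∫ 1_A(x,y) h(y) dλ(y)`, equals
`(∫ |μ(A_y) - ν(A_y)|^p dλ(y))^{1/p}`. -/
theorem sup_dual_eq_section_Lp_norm
    {X Y : Type*} [MeasurableSpace X] [MeasurableSpace Y]
    (lam : Measure Y) [IsFiniteMeasure lam]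
    (A : Set (X × Y)) (hA : MeasurableSet A)
    (p : ℝ) (hp : 1 ≤ p)
    (p' : ℝ≥0∞) (hp' : 1 < p')
    (hconj : 1 / ENNReal.ofReal p + 1 / p' = 1)
    (μ ν : Measure X) [IsProbabilityMeasure μ] [IsProbabilityMeasure ν] :
    sSup {r : ℝ | ∃ h : Y → ℝ, Measurable h ∧ eLpNorm h p' lam ≤ 1 ∧
        r = (∫ x, ∫ y, ({y : Y | (x, y) ∈ A}.indicator h) y ∂lam ∂μ) -
            ∫ x, ∫ y, ({y : Y | (x, y) ∈ A}.indicator h) y ∂lam ∂ν} =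
      (∫ y, |(μ {x : X | (x, y) ∈ A}).toReal - (ν {x : X | (x, y) ∈ A}).toReal| ^ p ∂lam)
        ^ (1 / p) := by
  have hp0 : 0 < p := lt_of_lt_of_le one_pos hp
  set g : Y → ℝ := fun y =>
    (μ {x : X | (x, y) ∈ A}).toReal - (ν {x : X | (x, y) ∈ A}).toReal with hg_def
  have hg_meas : Measurable g :=
    ((measurable_measure_prodMk_right hA).ennreal_toReal).sub
      ((measurable_measure_prodMk_right hA).ennreal_toReal)
  have hg_bd : ∀ y, |g y| ≤ 1 := by
    intro y
    have h1 : (μ {x : X | (x, y) ∈ A}).toReal ≤ 1 :=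
      ENNReal.toReal_le_of_le_ofReal zero_le_one (by simpa using prob_le_one)
    have h2 : (ν {x : X | (x, y) ∈ A}).toReal ≤ 1 :=
      ENNReal.toReal_le_of_le_ofReal zero_le_one (by simpa using prob_le_one)
    have h3 : 0 ≤ (μ {x : X | (x, y) ∈ A}).toReal := ENNReal.toReal_nonneg
    have h4 : 0 ≤ (ν {x : X | (x, y) ∈ A}).toReal := ENNReal.toReal_nonneg
    rw [abs_le]; constructor <;> simp only [hg_def] <;> nlinarith
  have habsg_meas : ∀ c : ℝ, 0 ≤ c → Measurable (fun y => |g y| ^ c) := fun c hc =>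
    (Real.continuous_rpow_const hc).measurable.comp hg_meas.abs
  have habsg_int : ∀ c : ℝ, 0 ≤ c → Integrable (fun y => |g y| ^ c) lam := by
    intro c hc
    refine memLp_one_iff_integrable.mp (MemLp.of_bound
      ((habsg_meas c hc).aestronglyMeasurable) 1 (Filter.Eventually.of_forall fun y => ?_))
    rw [Real.norm_eq_abs, abs_of_nonneg (Real.rpow_nonneg (abs_nonneg _) _)]
    exact Real.rpow_le_one (abs_nonneg _) (hg_bd y) hc
  set N' : ℝ := ∫ y, |g y| ^ p ∂lam with hN'_def
  have hN'_nonneg : 0 ≤ N' :=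
    integral_nonneg fun y => Real.rpow_nonneg (abs_nonneg _) _
  set N : ℝ := N' ^ (1 / p) with hN_def
  have hN_nonneg : 0 ≤ N := Real.rpow_nonneg hN'_nonneg _
  -- consequences of conjugacy
  have hp'top : p = 1 → p' = ⊤ := by
    intro h1
    rw [h1] at hconj
    rw [ENNReal.ofReal_one, one_div, one_div, inv_one] at hconj
    nth_rewrite 2 [← add_zero (1:ℝ≥0∞)] at hconj
    rw [ENNReal.add_right_inj one_ne_top] at hconj
    rwa [ENNReal.inv_eq_zero] at hconj
  have hconjR : 1 < p → p' ≠ ⊤ ∧ p.HolderConjugate p'.toReal := by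
    intro h1
    have hop1 : 1 < ENNReal.ofReal p := by
      rw [← ENNReal.ofReal_one]
      exact (ENNReal.ofReal_lt_ofReal_iff hp0).mpr h1
    have hopne : ENNReal.ofReal p ≠ 0 := by
      simp [ENNReal.ofReal_eq_zero, not_le, hp0]
    have hp'ne0 : p' ≠ 0 := (lt_trans zero_lt_one hp').ne'
    have htop : p' ≠ ⊤ := by
      intro hT
      rw [hT] at hconj
      simp only [one_div, ENNReal.inv_top, add_zero, ENNReal.inv_eq_one] at hconj
      rw [hconj] at hop1
      exact lt_irrefl _ hop1
    refine ⟨htop, Real.holderConjugate_iff.mpr ⟨h1, ?_⟩⟩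
    have := congrArg ENNReal.toReal hconj
    rw [one_div, one_div, ENNReal.toReal_add (ENNReal.inv_ne_top.mpr hopne)
      (ENNReal.inv_ne_top.mpr hp'ne0), ENNReal.toReal_inv, ENNReal.toReal_inv,
      ENNReal.toReal_ofReal hp0.le, ENNReal.toReal_one] at this
    exact this
  -- key identity
  have key : ∀ h : Y → ℝ, Integrable h lam →
      ((∫ x, ∫ y, ({y : Y | (x, y) ∈ A}.indicator h) y ∂lam ∂μ) -
        ∫ x, ∫ y, ({y : Y | (x, y) ∈ A}.indicator h) y ∂lam ∂ν)
      = ∫ y, h y * g y ∂lam := by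
    intro h hint
    rw [fubini_indicator_aux lam A hA μ h hint, fubini_indicator_aux lam A hA ν h hint]
    have hμint : Integrable (fun y => h y * (μ {x : X | (x, y) ∈ A}).toReal) lam := by
      have := hint.bdd_mul
        ((measurable_measure_prodMk_right (μ := μ) hA).ennreal_toReal).aestronglyMeasurable
        (Filter.Eventually.of_forall fun y => by
          rw [Real.norm_eq_abs, abs_of_nonneg ENNReal.toReal_nonneg]
          exact ENNReal.toReal_le_of_le_ofReal zero_le_one (by simpa using prob_le_one))
      simpa [mul_comm, Set.preimage] using this
    have hνint : Integrable (fun y => h y * (ν {x : X | (x, y) ∈ A}).toReal) lam := by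
      have := hint.bdd_mul
        ((measurable_measure_prodMk_right (μ := ν) hA).ennreal_toReal).aestronglyMeasurable
        (Filter.Eventually.of_forall fun y => by
          rw [Real.norm_eq_abs, abs_of_nonneg ENNReal.toReal_nonneg]
          exact ENNReal.toReal_le_of_le_ofReal zero_le_one (by simpa using prob_le_one))
      simpa [mul_comm, Set.preimage] using this
    rw [← integral_sub hμint hνint]
    congr 1; funext y; simp only [hg_def]; ring
  have hg_mul_int : ∀ h : Y → ℝ, Integrable h lam → Integrable (fun y => h y * g y) lam := by
    intro h hint
    have := hint.bdd_mul hg_meas.aestronglyMeasurable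
      (Filter.Eventually.of_forall fun y => by rw [Real.norm_eq_abs]; exact hg_bd y)
    simpa [mul_comm] using this
  have habs1 : Integrable (fun y => |g y|) lam := by
    simpa [Real.rpow_one] using habsg_int 1 zero_le_one
  -- upper bound
  have hub : ∀ r ∈ {r : ℝ | ∃ h : Y → ℝ, Measurable h ∧ eLpNorm h p' lam ≤ 1 ∧
      r = (∫ x, ∫ y, ({y : Y | (x, y) ∈ A}.indicator h) y ∂lam ∂μ) -
          ∫ x, ∫ y, ({y : Y | (x, y) ∈ A}.indicator h) y ∂lam ∂ν}, r ≤ N := by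
    rintro r ⟨h, hm, hnorm, rfl⟩
    have hmemh : MemLp h p' lam := ⟨hm.aestronglyMeasurable, lt_of_le_of_lt hnorm one_lt_top⟩
    have hint : Integrable h lam := hmemh.integrable hp'.le
    rw [key h hint]
    rcases eq_or_lt_of_le hp with hp1 | hp1
    · -- p = 1
      have htop := hp'top hp1.symm
      have hN1 : N = ∫ y, |g y| ∂lam := by
        rw [hN_def, hN'_def, ← hp1]
        simp [Real.rpow_one]
      have hae : ∀ᵐ y ∂lam, |h y| ≤ 1 := by
        have h1 := enorm_ae_le_eLpNormEssSup h lam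
        have h2 : eLpNormEssSup h lam ≤ 1 := by rwa [htop, eLpNorm_exponent_top] at hnorm
        filter_upwards [h1] with y hy
        have h3 : (‖h y‖₊ : ℝ≥0∞) ≤ 1 := hy.trans h2
        rw [← Real.norm_eq_abs, ← coe_nnnorm]
        exact_mod_cast ENNReal.coe_le_one_iff.mp h3
      rw [hN1]
      refine integral_mono_ae (hg_mul_int h hint) habs1 ?_
      filter_upwards [hae] with y hy
      calc h y * g y ≤ |h y * g y| := le_abs_self _
        _ = |h y| * |g y| := abs_mul _ _
        _ ≤ 1 * |g y| := mul_le_mul_of_nonneg_right hy (abs_nonneg _)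
        _ = |g y| := one_mul _
    · -- 1 < p
      obtain ⟨htop, hq⟩ := hconjR hp1
      set q : ℝ := p'.toReal with hq_def
      have hq_pos : 0 < q := hq.symm.pos
      have hmemg : MemLp (fun y => |g y|) (ENNReal.ofReal p) lam :=
        MemLp.of_bound hg_meas.abs.aestronglyMeasurable 1
          (Filter.Eventually.of_forall fun y => by
            rw [Real.norm_eq_abs, abs_abs]; exact hg_bd y)
      have hmemh_abs : MemLp (fun y => |h y|) (ENNReal.ofReal q) lam := by
        rw [hq_def, ENNReal.ofReal_toReal htop]
        simpa [Real.norm_eq_abs] using hmemh.norm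
      have hholder := integral_mul_le_Lp_mul_Lq_of_nonneg hq
        (Filter.Eventually.of_forall fun y => abs_nonneg (g y))
        (Filter.Eventually.of_forall fun y => abs_nonneg (h y)) hmemg hmemh_abs
      have hfac2 : (∫ y, |h y| ^ q ∂lam) ^ (1/q) ≤ 1 := by
        have heq := hmemh.eLpNorm_eq_integral_rpow_norm
          (lt_trans zero_lt_one hp').ne' htop
        rw [heq, ← ENNReal.ofReal_one] at hnorm
        have h2 := (ENNReal.ofReal_le_ofReal_iff zero_le_one).mp hnorm
        simpa [Real.norm_eq_abs, one_div] using h2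
      have hint_absmul : Integrable (fun y => |g y| * |h y|) lam := by
        have := hint.abs.bdd_mul hg_meas.abs.aestronglyMeasurable
          (Filter.Eventually.of_forall fun y => by rw [Real.norm_eq_abs, abs_abs]; exact hg_bd y)
        simpa [mul_comm] using this
      calc ∫ y, h y * g y ∂lam ≤ ∫ y, |g y| * |h y| ∂lam := by
            refine integral_mono (hg_mul_int h hint) hint_absmul fun y => ?_
            calc h y * g y ≤ |h y * g y| := le_abs_self _
              _ = |g y| * |h y| := by rw [abs_mul, mul_comm]
        _ ≤ (∫ y, |g y| ^ p ∂lam) ^ (1/p) * (∫ y, |h y| ^ q ∂lam) ^ (1/q) := hholder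
        _ ≤ N := by
            rw [← hN'_def, ← hN_def]
            exact mul_le_of_le_one_right hN_nonneg hfac2
  -- membership
  have hmem : N ∈ {r : ℝ | ∃ h : Y → ℝ, Measurable h ∧ eLpNorm h p' lam ≤ 1 ∧
      r = (∫ x, ∫ y, ({y : Y | (x, y) ∈ A}.indicator h) y ∂lam ∂μ) -
          ∫ x, ∫ y, ({y : Y | (x, y) ∈ A}.indicator h) y ∂lam ∂ν} := by
    rcases eq_or_lt_of_le hp with hp1 | hp1
    · -- p = 1 : take the sign of g
      have htop := hp'top hp1.symm
      have hN1 : N = ∫ y, |g y| ∂lam := by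
        rw [hN_def, hN'_def, ← hp1]
        simp [Real.rpow_one]
      set h₀ : Y → ℝ := fun y => if g y < 0 then (-1:ℝ) else 1 with hh₀
      have hm₀ : Measurable h₀ :=
        Measurable.ite (measurableSet_lt hg_meas measurable_const)
          measurable_const measurable_const
      have hb₀ : ∀ y, ‖h₀ y‖ ≤ 1 := by
        intro y; by_cases hy : g y < 0 <;> simp [hh₀, hy]
      have hint₀ : Integrable h₀ lam := memLp_one_iff_integrable.mp
        (MemLp.of_bound hm₀.aestronglyMeasurable 1 (Filter.Eventually.of_forall hb₀))
      refine ⟨h₀, hm₀, ?_, ?_⟩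
      · rw [htop, eLpNorm_exponent_top]
        simpa using eLpNormEssSup_le_of_ae_bound (C := 1) (Filter.Eventually.of_forall hb₀)
      · rw [key h₀ hint₀, hN1]
        refine (integral_congr_ae (Filter.Eventually.of_forall fun y => ?_)).symm
        rcases lt_or_ge (g y) 0 with hy | hy
        · simp [hh₀, hy, abs_of_neg hy]
        · simp [hh₀, not_lt.mpr hy, abs_of_nonneg hy]
    · -- 1 < p
      obtain ⟨htop, hq⟩ := hconjR hp1
      set q : ℝ := p'.toReal with hq_def
      have hq_pos : 0 < q := hq.symm.pos
      rcases eq_or_lt_of_le hN'_nonneg with hN'0 | hN'pos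
      · -- degenerate case N' = 0
        have hN0 : N = 0 := by
          rw [hN_def, ← hN'0, Real.zero_rpow (by positivity)]
        refine ⟨0, measurable_const, by simp, ?_⟩
        rw [hN0]
        simp
      · -- N' > 0
        have hN'ne : N' ≠ 0 := hN'pos.ne'
        set c : ℝ := N' ^ (1/q) with hc_def
        have hc : 0 < c := Real.rpow_pos_of_pos hN'pos _
        set s : Y → ℝ := fun y => if g y < 0 then (-1:ℝ) else 1 with hs_def
        have hs_meas : Measurable s :=
          Measurable.ite (measurableSet_lt hg_meas measurable_const)
            measurable_const measurable_const
        set h₀ : Y → ℝ := fun y => s y * |g y| ^ (p-1) / c with hh₀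
        have hm₀ : Measurable h₀ :=
          (hs_meas.mul (habsg_meas (p-1) (by linarith))).div_const c
        have habs₀ : ∀ y, ‖h₀ y‖ = |g y| ^ (p-1) / c := by
          intro y
          rw [Real.norm_eq_abs, hh₀]
          rw [abs_div, abs_mul, abs_of_pos hc,
            abs_of_nonneg (Real.rpow_nonneg (abs_nonneg _) _)]
          have : |s y| = 1 := by by_cases hy : g y < 0 <;> simp [hs_def, hy]
          rw [this, one_mul]
        have hb₀ : ∀ y, ‖h₀ y‖ ≤ 1/c := by
          intro y
          rw [habs₀ y, div_le_div_iff_of_pos_right hc]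
          exact Real.rpow_le_one (abs_nonneg _) (hg_bd y) (by linarith)
        have hmem₀ : MemLp h₀ p' lam :=
          MemLp.of_bound hm₀.aestronglyMeasurable (1/c) (Filter.Eventually.of_forall hb₀)
        have hint₀ : Integrable h₀ lam := hmem₀.integrable hp'.le
        have hnormint : ∫ y, ‖h₀ y‖ ^ q ∂lam = 1 := by
          have hpt : ∀ y, ‖h₀ y‖ ^ q = |g y| ^ p / N' := by
            intro y
            rw [habs₀ y, Real.div_rpow (Real.rpow_nonneg (abs_nonneg _) _) hc.le,
              ← Real.rpow_mul (abs_nonneg _), hq.sub_one_mul_conj, hc_def,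
              ← Real.rpow_mul hN'_nonneg, one_div, inv_mul_cancel₀ hq_pos.ne',
              Real.rpow_one]
          rw [integral_congr_ae (Filter.Eventually.of_forall hpt), integral_div,
            ← hN'_def, div_self hN'ne]
        refine ⟨h₀, hm₀, ?_, ?_⟩
        · rw [hmem₀.eLpNorm_eq_integral_rpow_norm (lt_trans zero_lt_one hp').ne' htop,
            ← hq_def, hnormint, Real.one_rpow, ENNReal.ofReal_one]
        · rw [key h₀ hint₀]
          have hpt : ∀ y, h₀ y * g y = |g y| ^ p / c := by
            intro y
            have hsg : s y * g y = |g y| := by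
              rcases lt_or_ge (g y) 0 with hy | hy
              · simp [hs_def, hy, abs_of_neg hy]
              · simp [hs_def, not_lt.mpr hy, abs_of_nonneg hy]
            rw [hh₀]
            have : s y * |g y| ^ (p - 1) / c * g y = (s y * g y) * |g y| ^ (p-1) / c := by ring
            have habs_prod : |g y| * |g y| ^ (p - 1) = |g y| ^ p := by
              nth_rewrite 1 [← Real.rpow_one (|g y|)]
              rw [← Real.rpow_add_of_nonneg (abs_nonneg _) zero_le_one
                (by linarith : (0:ℝ) ≤ p - 1)]
              norm_num
            rw [this, hsg, habs_prod]
          rw [integral_congr_ae (Filter.Eventually.of_forall hpt)]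
          have : ∫ y, |g y| ^ p / c ∂lam = N' / c := by
            rw [integral_div, ← hN'_def]
          rw [this]
          have h1q : (1:ℝ)/p = 1 - 1/q := by
            have := hq.inv_add_inv_eq_one
            rw [one_div, one_div]
            linarith
          rw [hN_def, hc_def, h1q, Real.rpow_sub hN'pos, Real.rpow_one]
  exact IsGreatest.csSup_eq ⟨hmem, hub⟩
end

section
/- Let X and Y be measurable spaces, let λ be a finite nonnegative measure on Y, and let A ⊆ X × Y be a measurable set. For 1 ≤ p ≤ ∞ with conjugate exponent p′ (1/p + 1/p′ = 1), define, for Borel probability measures μ, ν on X, D_p(μ, ν) := sup { ∫_X f_h dμ − ∫_X f_h dν : h measurable, ‖h‖_{L^{p′}(Y, λ)} ≤ 1 }, where f_h(x) := ∫_Y 1_A(x, y) h(y) λ(dy). Then for any 1 ≤ p < q ≤ ∞ with conjugate exponents q′ < p′, one has D_p(μ, ν) ≤ λ(Y)^{1/q′ − 1/p′} · D_q(μ, ν). -/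
open MeasureTheory ENNReal

/-- Upper bound comparison between the transport-type distances `D_p` and `D_q` for
`1 ≤ p < q ≤ ∞`: `D_p(μ,ν) ≤ λ(Y)^{1/q' - 1/p'} D_q(μ,ν)`. -/
theorem Dp_le_Dq_comparison
    {X Y : Type*} [MeasurableSpace X] [MeasurableSpace Y]
    (lam : Measure Y) [IsFiniteMeasure lam]
    (A : Set (X × Y)) (hA : MeasurableSet A)
    (p q p' q' : ℝ≥0∞)
    (hp : 1 ≤ p) (hpq : p < q)
    (hconjp : 1 / p + 1 / p' = 1) (hconjq : 1 / q + 1 / q' = 1)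
    (hq'p' : q' < p')
    (μ ν : Measure X) [IsProbabilityMeasure μ] [IsProbabilityMeasure ν]
    (Dp Dq : ℝ)
    (hDp : Dp = sSup {r : ℝ | ∃ h : Y → ℝ, Measurable h ∧ eLpNorm h p' lam ≤ 1 ∧
        r = (∫ x, ∫ y, ({y : Y | (x, y) ∈ A}.indicator h) y ∂lam ∂μ) -
            ∫ x, ∫ y, ({y : Y | (x, y) ∈ A}.indicator h) y ∂lam ∂ν})
    (hDq : Dq = sSup {r : ℝ | ∃ h : Y → ℝ, Measurable h ∧ eLpNorm h q' lam ≤ 1 ∧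
        r = (∫ x, ∫ y, ({y : Y | (x, y) ∈ A}.indicator h) y ∂lam ∂μ) -
            ∫ x, ∫ y, ({y : Y | (x, y) ∈ A}.indicator h) y ∂lam ∂ν}) :
    Dp ≤ (lam Set.univ).toReal ^ ((1 / q').toReal - (1 / p').toReal) * Dq := by
  classical
  have hq1 : 1 < q := lt_of_le_of_lt hp hpq
  -- basic facts about q' and p'
  have hq'top : q' ≠ ∞ := by
    intro h
    rw [h] at hconjq
    simp only [ENNReal.div_top, add_zero, one_div] at hconjq
    have hq : q = 1 := by
      have := congrArg (fun a => a⁻¹) hconjq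
      simpa using this
    exact hq1.ne' hq
  have hq'1 : 1 ≤ q' := by
    have h1 : 1 / q' ≤ 1 := by
      calc 1 / q' ≤ 1 / q + 1 / q' := le_add_self
      _ = 1 := hconjq
    rw [one_div] at h1
    exact ENNReal.inv_le_one.mp h1
  have hp'1 : 1 ≤ p' := by
    have h1 : 1 / p' ≤ 1 := by
      calc 1 / p' ≤ 1 / p + 1 / p' := le_add_self
      _ = 1 := hconjp
    rw [one_div] at h1
    exact ENNReal.inv_le_one.mp h1
  have hq'real : 1 ≤ q'.toReal := by
    have := ENNReal.toReal_mono hq'top hq'1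
    simpa using this
  -- the exponent
  set e : ℝ := (1 / q').toReal - (1 / p').toReal with he
  have hinvlt : 1 / p' < 1 / q' := by
    rw [one_div, one_div]
    exact ENNReal.inv_lt_inv.mpr hq'p'
  have hq'0 : q' ≠ 0 := by
    intro h; rw [h] at hq'1; simp at hq'1
  have hp'0 : p' ≠ 0 := by
    intro h; rw [h] at hp'1; simp at hp'1
  have hinvq'top : 1 / q' ≠ ∞ := by
    rw [one_div]; exact ENNReal.inv_ne_top.mpr hq'0
  have hinvp'top : 1 / p' ≠ ∞ := by
    rw [one_div]; exact ENNReal.inv_ne_top.mpr hp'0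
  have hepos : 0 < e := by
    rw [he, sub_pos]
    exact (ENNReal.toReal_lt_toReal hinvp'top hinvq'top).mpr hinvlt
  have he' : e = 1 / q'.toReal - 1 / p'.toReal := by
    simp [he, one_div, ENNReal.toReal_inv]
  set c : ℝ := (lam Set.univ).toReal ^ e with hc
  by_cases hlam : lam = 0
  · -- trivial case: the measure is zero
    have hc0 : c = 0 := by
      rw [hc, hlam]
      simp [Real.zero_rpow hepos.ne']
    have hDp0 : Dp ≤ 0 := by
      rw [hDp]
      apply Real.sSup_le _ le_rfl
      rintro r ⟨h, -, -, rfl⟩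
      simp [hlam]
    calc Dp ≤ 0 := hDp0
    _ = c * Dq := by rw [hc0, zero_mul]
  -- main case
  have hlamtop : lam Set.univ ≠ ∞ := measure_ne_top lam _
  have hlam0 : lam Set.univ ≠ 0 := fun h => hlam (Measure.measure_univ_eq_zero.mp h)
  have hcpos : 0 < c := Real.rpow_pos_of_pos (ENNReal.toReal_pos hlam0 hlamtop) e
  -- the q-set
  set Sq : Set ℝ := {r : ℝ | ∃ h : Y → ℝ, Measurable h ∧ eLpNorm h q' lam ≤ 1 ∧
        r = (∫ x, ∫ y, ({y : Y | (x, y) ∈ A}.indicator h) y ∂lam ∂μ) -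
            ∫ x, ∫ y, ({y : Y | (x, y) ∈ A}.indicator h) y ∂lam ∂ν} with hSq
  have hzero : (0 : ℝ) ∈ Sq := by
    refine ⟨0, measurable_const, by simp [eLpNorm_zero], by simp⟩
  -- uniform bound on the sections
  set K : ℝ≥0∞ := lam Set.univ ^ (1 - 1 / q'.toReal) with hK
  have hKexp : (0:ℝ) ≤ 1 - 1 / q'.toReal := by
    have h1 : 1 / q'.toReal ≤ 1 := by
      rw [div_le_one (by linarith)]; linarith
    linarith
  have hKtop : K ≠ ∞ := ENNReal.rpow_ne_top_of_nonneg hKexp hlamtop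
  -- for any h with `eLpNorm h q' lam ≤ 1`, inner integrals are bounded by `K.toReal`
  have inner_bound : ∀ (h : Y → ℝ), Measurable h → eLpNorm h q' lam ≤ 1 →
      ∀ x : X, ‖∫ y, ({y : Y | (x, y) ∈ A}.indicator h) y ∂lam‖ ≤ K.toReal := by
    intro h hm hn x
    have hmem : MemLp h q' lam := ⟨hm.aestronglyMeasurable, lt_of_le_of_lt hn one_lt_top⟩
    have hint : Integrable h lam := hmem.integrable hq'1
    calc ‖∫ y, ({y : Y | (x, y) ∈ A}.indicator h) y ∂lam‖
        ≤ ∫ y, ‖({y : Y | (x, y) ∈ A}.indicator h) y‖ ∂lam := norm_integral_le_integral_norm _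
      _ ≤ ∫ y, ‖h y‖ ∂lam := by
          apply integral_mono_of_nonneg (Filter.Eventually.of_forall fun y => norm_nonneg _)
            hint.norm (Filter.Eventually.of_forall fun y => norm_indicator_le_norm_self h y)
      _ = (eLpNorm h 1 lam).toReal := by
          rw [integral_norm_eq_lintegral_enorm hm.aestronglyMeasurable,
            eLpNorm_one_eq_lintegral_enorm]
      _ ≤ K.toReal := by
          apply ENNReal.toReal_mono hKtop
          calc eLpNorm h 1 lam
              ≤ eLpNorm h q' lam * lam Set.univ ^ (1 / (1:ℝ≥0∞).toReal - 1 / q'.toReal) :=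
                eLpNorm_le_eLpNorm_mul_rpow_measure_univ hq'1 hm.aestronglyMeasurable
            _ ≤ 1 * lam Set.univ ^ (1 / (1:ℝ≥0∞).toReal - 1 / q'.toReal) :=
                mul_le_mul_left hn _
            _ = K := by norm_num [hK]
  -- bound on elements of Sq
  have hSqbound : ∀ r ∈ Sq, r ≤ 2 * K.toReal := by
    rintro r ⟨h, hm, hn, rfl⟩
    have h1 : ‖∫ x, ∫ y, ({y : Y | (x, y) ∈ A}.indicator h) y ∂lam ∂μ‖
        ≤ K.toReal * (μ Set.univ).toReal :=
      norm_integral_le_of_norm_le_const (Filter.Eventually.of_forall (inner_bound h hm hn))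
    have h2 : ‖∫ x, ∫ y, ({y : Y | (x, y) ∈ A}.indicator h) y ∂lam ∂ν‖
        ≤ K.toReal * (ν Set.univ).toReal :=
      norm_integral_le_of_norm_le_const (Filter.Eventually.of_forall (inner_bound h hm hn))
    simp only [measure_univ, ENNReal.toReal_one, mul_one] at h1 h2
    have := abs_le.mp (Real.norm_eq_abs _ ▸ h1)
    have := abs_le.mp (Real.norm_eq_abs _ ▸ h2)
    rw [Real.norm_eq_abs] at h1 h2
    have h1' := (abs_le.mp h1).2
    have h2' := (abs_le.mp h2).1
    linarith
  have hSqbdd : BddAbove Sq := ⟨2 * K.toReal, fun r hr => hSqbound r hr⟩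
  have hDq0 : 0 ≤ Dq := by rw [hDq]; exact le_csSup hSqbdd hzero
  -- main comparison
  rw [hDp]
  apply Real.sSup_le _ (mul_nonneg hcpos.le hDq0)
  rintro r ⟨h, hm, hn, rfl⟩
  set g : Y → ℝ := c⁻¹ • h with hg
  have hgm : Measurable g := hm.const_smul c⁻¹
  -- `eLpNorm g q' lam ≤ 1`
  have hce : c = (lam Set.univ ^ e).toReal := by
    rw [hc, ← ENNReal.toReal_rpow]
  have hlamE : ENNReal.ofReal c = lam Set.univ ^ e := by
    rw [hce, ENNReal.ofReal_toReal (ENNReal.rpow_ne_top_of_nonneg hepos.le hlamtop)]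
  have hgn : eLpNorm g q' lam ≤ 1 := by
    have step1 : eLpNorm h q' lam ≤ lam Set.univ ^ e := by
      calc eLpNorm h q' lam
          ≤ eLpNorm h p' lam * lam Set.univ ^ (1 / q'.toReal - 1 / p'.toReal) :=
            eLpNorm_le_eLpNorm_mul_rpow_measure_univ hq'p'.le hm.aestronglyMeasurable
        _ ≤ 1 * lam Set.univ ^ e := by
            rw [← he']
            exact mul_le_mul_left hn _
        _ = lam Set.univ ^ e := one_mul _
    have hnorm : (‖c⁻¹‖₊ : ℝ≥0∞) = ENNReal.ofReal c⁻¹ := by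
      rw [← enorm_eq_nnnorm, ← ofReal_norm, Real.norm_eq_abs, abs_of_nonneg (inv_nonneg.mpr hcpos.le)]
    calc eLpNorm g q' lam = (‖c⁻¹‖₊ : ℝ≥0∞) * eLpNorm h q' lam := eLpNorm_const_smul _ _ _ _
      _ ≤ ENNReal.ofReal c⁻¹ * (lam Set.univ ^ e) := by
          rw [hnorm]; exact mul_le_mul_right step1 _
      _ = ENNReal.ofReal c⁻¹ * ENNReal.ofReal c := by rw [hlamE]
      _ = ENNReal.ofReal (c⁻¹ * c) := (ENNReal.ofReal_mul (inv_nonneg.mpr hcpos.le)).symm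
      _ = 1 := by rw [inv_mul_cancel₀ hcpos.ne', ENNReal.ofReal_one]
  -- the integrals scale
  have hscale : ∀ m : Measure X,
      (∫ x, ∫ y, ({y : Y | (x, y) ∈ A}.indicator g) y ∂lam ∂m)
        = c⁻¹ * ∫ x, ∫ y, ({y : Y | (x, y) ∈ A}.indicator h) y ∂lam ∂m := by
    intro m
    rw [← integral_const_mul]
    congr 1
    funext x
    rw [← integral_const_mul]
    congr 1
    funext y
    simp [hg, Set.indicator_apply, mul_ite]
  have hmemSq : c⁻¹ * ((∫ x, ∫ y, ({y : Y | (x, y) ∈ A}.indicator h) y ∂lam ∂μ) -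
      ∫ x, ∫ y, ({y : Y | (x, y) ∈ A}.indicator h) y ∂lam ∂ν) ∈ Sq := by
    refine ⟨g, hgm, hgn, ?_⟩
    rw [hscale μ, hscale ν, mul_sub]
  have hle : c⁻¹ * ((∫ x, ∫ y, ({y : Y | (x, y) ∈ A}.indicator h) y ∂lam ∂μ) -
      ∫ x, ∫ y, ({y : Y | (x, y) ∈ A}.indicator h) y ∂lam ∂ν) ≤ Dq := by
    rw [hDq]
    exact le_csSup hSqbdd hmemSq
  calc (∫ x, ∫ y, ({y : Y | (x, y) ∈ A}.indicator h) y ∂lam ∂μ) -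
      ∫ x, ∫ y, ({y : Y | (x, y) ∈ A}.indicator h) y ∂lam ∂ν
      = c * (c⁻¹ * ((∫ x, ∫ y, ({y : Y | (x, y) ∈ A}.indicator h) y ∂lam ∂μ) -
          ∫ x, ∫ y, ({y : Y | (x, y) ∈ A}.indicator h) y ∂lam ∂ν)) := by
        rw [← mul_assoc, mul_inv_cancel₀ hcpos.ne', one_mul]
    _ ≤ c * Dq := mul_le_mul_of_nonneg_left hle hcpos.le
end

section
/- Let 1 ≤ p ≤ 2. Then the kernel k(a, b) := |a − b|^p on ℝ is negative definite: for every integer n ≥ 1, all a_1, …, a_n ∈ ℝ and all c_1, …, c_n ∈ ℝ with ∑_{i=1}^n c_i = 0, one has ∑_{i=1}^n ∑_{j=1}^n c_i c_j |a_i − a_j|^p ≤ 0. -/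
open MeasureTheory Real Set

/-- Continuity of the integrand on `Ioi 0`. -/
lemma aux_contOn (p x : ℝ) :
    ContinuousOn (fun t : ℝ => (1 - Real.cos (x * t)) * t ^ (-1 - p)) (Set.Ioi 0) := by
  apply ContinuousOn.mul
  · exact (continuous_const.sub
      (Real.continuous_cos.comp (continuous_const.mul continuous_id))).continuousOn
  · exact ContinuousOn.rpow_const continuousOn_id fun t ht => Or.inl (ne_of_gt ht)

/-- Integrability of the integrand on `Ioi 0` for `1 ≤ p < 2`. -/
lemma aux_integrable (p x : ℝ) (hp1 : 1 ≤ p) (hp2 : p < 2) :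
    IntegrableOn (fun t : ℝ => (1 - Real.cos (x * t)) * t ^ (-1 - p)) (Set.Ioi 0) := by
  have hmeas : AEStronglyMeasurable (fun t : ℝ => (1 - Real.cos (x * t)) * t ^ (-1 - p))
      (volume.restrict (Set.Ioi (0:ℝ))) :=
    (aux_contOn p x).aestronglyMeasurable measurableSet_Ioi
  rw [← Set.Ioc_union_Ioi_eq_Ioi (zero_le_one)]
  apply IntegrableOn.union
  · -- on Ioc 0 1, bound by x^2 * t^(1-p)
    have hbig : IntegrableOn (fun t : ℝ => x ^ 2 * t ^ (1 - p)) (Set.Ioc 0 1) := by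
      have h := intervalIntegral.intervalIntegrable_rpow' (a := 0) (b := 1) (r := 1 - p)
        (by linarith)
      rw [intervalIntegrable_iff_integrableOn_Ioc_of_le zero_le_one] at h
      exact h.const_mul _
    apply Integrable.mono' hbig
    · exact hmeas.mono_measure (Measure.restrict_mono Set.Ioc_subset_Ioi_self le_rfl)
    · rw [ae_restrict_iff' measurableSet_Ioc]
      filter_upwards with t ht
      have ht0 : 0 < t := ht.1
      have hnn : 0 ≤ (1 - Real.cos (x * t)) * t ^ (-1 - p) :=
        mul_nonneg (by nlinarith [Real.cos_le_one (x * t)]) (Real.rpow_nonneg ht0.le _)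
      rw [Real.norm_eq_abs, abs_of_nonneg hnn]
      have h1 : 1 - Real.cos (x * t) ≤ x ^ 2 * t ^ 2 := by
        nlinarith [Real.one_sub_sq_div_two_le_cos (x := x * t), sq_nonneg (x * t)]
      have h2 : t ^ (2:ℕ) * t ^ (-1 - p) = t ^ (1 - p) := by
        rw [← Real.rpow_natCast t 2, ← Real.rpow_add ht0]
        congr 1
        push_cast
        ring
      calc (1 - Real.cos (x * t)) * t ^ (-1 - p)
          ≤ (x ^ 2 * t ^ 2) * t ^ (-1 - p) :=
            mul_le_mul_of_nonneg_right h1 (Real.rpow_nonneg ht0.le _)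
        _ = x ^ 2 * (t ^ (2:ℕ) * t ^ (-1 - p)) := by ring
        _ = x ^ 2 * t ^ (1 - p) := by rw [h2]
  · -- on Ioi 1, bound by 2 * t^(-1-p)
    have hbig : IntegrableOn (fun t : ℝ => 2 * t ^ (-1 - p)) (Set.Ioi 1) :=
      (integrableOn_Ioi_rpow_of_lt (by linarith) one_pos).const_mul 2
    apply Integrable.mono' hbig
    · exact hmeas.mono_measure (Measure.restrict_mono (Set.Ioi_subset_Ioi zero_le_one) le_rfl)
    · rw [ae_restrict_iff' measurableSet_Ioi]
      filter_upwards with t ht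
      have ht0 : (0:ℝ) < t := lt_trans one_pos ht
      have hnn : 0 ≤ (1 - Real.cos (x * t)) * t ^ (-1 - p) :=
        mul_nonneg (by nlinarith [Real.cos_le_one (x * t)]) (Real.rpow_nonneg ht0.le _)
      rw [Real.norm_eq_abs, abs_of_nonneg hnn]
      exact mul_le_mul_of_nonneg_right (by nlinarith [Real.neg_one_le_cos (x * t)])
        (Real.rpow_nonneg ht0.le _)

/-- Positivity of the normalization constant. -/
lemma aux_C_pos (p : ℝ) (hp1 : 1 ≤ p) (hp2 : p < 2) :
    0 < ∫ t in Set.Ioi (0:ℝ), (1 - Real.cos t) * t ^ (-1 - p) := by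
  have hint : IntegrableOn (fun t : ℝ => (1 - Real.cos t) * t ^ (-1 - p)) (Set.Ioi 0) := by
    have := aux_integrable p 1 hp1 hp2
    simpa only [one_mul] using this
  have hc1 : Real.cos 1 < 1 := by
    have := Real.cos_lt_cos_of_nonneg_of_le_pi le_rfl (by linarith [Real.pi_gt_three]) one_pos
    simpa [Real.cos_zero] using this
  set c : ℝ := (1 - Real.cos 1) * (2:ℝ) ^ (-1 - p) with hc
  have hcpos : 0 < c := mul_pos (by linarith) (Real.rpow_pos_of_pos two_pos _)
  have m2 : c * (volume (Set.Ioc (1:ℝ) 2)).toReal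
      ≤ ∫ t in Set.Ioc (1:ℝ) 2, (1 - Real.cos t) * t ^ (-1 - p) := by
    apply setIntegral_ge_of_const_le_real measurableSet_Ioc
      (by simp [Real.volume_Ioc])
    · intro t ht
      have ht1 : (1:ℝ) ≤ t := ht.1.le
      have ht0 : (0:ℝ) < t := lt_of_lt_of_le one_pos ht1
      have hcos : Real.cos t ≤ Real.cos 1 := by
        rcases eq_or_lt_of_le ht1 with h | h
        · rw [← h]
        · exact (Real.cos_lt_cos_of_nonneg_of_le_pi zero_le_one
            (by linarith [Real.pi_gt_three, ht.2]) h).le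
      have hrpow : (2:ℝ) ^ (-1 - p) ≤ t ^ (-1 - p) := by
        rcases eq_or_lt_of_le ht.2 with h | h
        · rw [h]
        · exact Real.rpow_le_rpow_of_nonpos ht0 h.le (by linarith)
      have := mul_le_mul (by linarith : 1 - Real.cos 1 ≤ 1 - Real.cos t) hrpow
        (Real.rpow_pos_of_pos two_pos _).le (by nlinarith [Real.cos_le_one t])
      exact this
    · exact hint.mono_set (fun t ht => lt_of_lt_of_le one_pos ht.1.le)
  have m1 : (∫ t in Set.Ioc (1:ℝ) 2, (1 - Real.cos t) * t ^ (-1 - p))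
      ≤ ∫ t in Set.Ioi (0:ℝ), (1 - Real.cos t) * t ^ (-1 - p) := by
    apply setIntegral_mono_set hint
    · filter_upwards [ae_restrict_mem measurableSet_Ioi] with t ht
      exact mul_nonneg (by nlinarith [Real.cos_le_one t]) (Real.rpow_nonneg (le_of_lt ht) _)
    · exact HasSubset.Subset.eventuallyLE (fun t ht => lt_of_lt_of_le one_pos ht.1.le)
  have hvol : (volume (Set.Ioc (1:ℝ) 2)).toReal = 1 := by
    simp [Real.volume_Ioc]; norm_num
  calc (0:ℝ) < c := hcpos
    _ = c * (volume (Set.Ioc (1:ℝ) 2)).toReal := by rw [hvol, mul_one]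
    _ ≤ _ := le_trans m2 m1

/-- Scaling identity. -/
lemma aux_scale (p : ℝ) (hp1 : 1 ≤ p) (x : ℝ) :
    ∫ t in Set.Ioi (0:ℝ), (1 - Real.cos (x * t)) * t ^ (-1 - p)
      = |x| ^ p * ∫ t in Set.Ioi (0:ℝ), (1 - Real.cos t) * t ^ (-1 - p) := by
  rcases eq_or_ne x 0 with rfl | hx
  · simp [Real.zero_rpow (by linarith : p ≠ 0)]
  · have hb : 0 < |x| := abs_pos.mpr hx
    have hcos : ∀ t : ℝ, Real.cos (x * t) = Real.cos (|x| * t) := by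
      intro t
      rcases abs_cases x with ⟨h, _⟩ | ⟨h, _⟩
      · rw [h]
      · rw [h, neg_mul, Real.cos_neg]
    have hxx : |x| ^ (1 + p) * |x| ^ (-1 - p) = 1 := by
      rw [← Real.rpow_add hb]
      norm_num
    calc ∫ t in Set.Ioi (0:ℝ), (1 - Real.cos (x * t)) * t ^ (-1 - p)
        = ∫ t in Set.Ioi (0:ℝ),
            |x| ^ (1 + p) * ((1 - Real.cos (|x| * t)) * (|x| * t) ^ (-1 - p)) := by
          apply setIntegral_congr_fun measurableSet_Ioi
          intro t ht
          dsimp only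
          rw [hcos t, Real.mul_rpow hb.le (le_of_lt ht),
            show |x| ^ (1 + p) * ((1 - Real.cos (|x| * t)) * (|x| ^ (-1 - p) * t ^ (-1 - p)))
              = (|x| ^ (1 + p) * |x| ^ (-1 - p)) * ((1 - Real.cos (|x| * t)) * t ^ (-1 - p))
              from by ring, hxx, one_mul]
      _ = |x| ^ (1 + p) *
            ∫ t in Set.Ioi (0:ℝ), (1 - Real.cos (|x| * t)) * (|x| * t) ^ (-1 - p) :=
          integral_const_mul _ _
      _ = |x| ^ (1 + p) *
            (|x|⁻¹ * ∫ t in Set.Ioi (0:ℝ), (1 - Real.cos t) * t ^ (-1 - p)) := by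
          rw [integral_comp_mul_left_Ioi (fun u => (1 - Real.cos u) * u ^ (-1 - p)) 0 hb,
            mul_zero, smul_eq_mul]
      _ = |x| ^ p * ∫ t in Set.Ioi (0:ℝ), (1 - Real.cos t) * t ^ (-1 - p) := by
          rw [show |x| ^ (1 + p) * (|x|⁻¹ * ∫ t in Set.Ioi (0:ℝ), (1 - Real.cos t) * t ^ (-1 - p))
              = (|x| ^ (1 + p) * |x| ^ (-(1:ℝ))) * ∫ t in Set.Ioi (0:ℝ),
                (1 - Real.cos t) * t ^ (-1 - p)
              from by rw [Real.rpow_neg_one]; ring, ← Real.rpow_add hb]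
          norm_num

/-- The key pointwise inequality: positive definiteness of cosine. -/
lemma aux_trig {n : ℕ} (a c : Fin n → ℝ) (hc : ∑ i, c i = 0) (t : ℝ) :
    ∑ i, ∑ j, c i * c j * (1 - Real.cos ((a i - a j) * t)) ≤ 0 := by
  have expand : (∑ i, c i) * (∑ j, c j)
      - ((∑ i, c i * Real.cos (a i * t)) * (∑ j, c j * Real.cos (a j * t))
        + (∑ i, c i * Real.sin (a i * t)) * (∑ j, c j * Real.sin (a j * t)))
      = ∑ i, ∑ j, c i * c j * (1 - Real.cos ((a i - a j) * t)) := by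
    rw [Finset.sum_mul_sum, Finset.sum_mul_sum, Finset.sum_mul_sum,
      ← Finset.sum_add_distrib, ← Finset.sum_sub_distrib]
    refine Finset.sum_congr rfl fun i _ => ?_
    rw [← Finset.sum_add_distrib, ← Finset.sum_sub_distrib]
    refine Finset.sum_congr rfl fun j _ => ?_
    rw [sub_mul, Real.cos_sub]
    ring
  rw [← expand, hc]
  nlinarith [sq_nonneg (∑ i, c i * Real.cos (a i * t)),
    sq_nonneg (∑ i, c i * Real.sin (a i * t))]

/-- For `1 ≤ p ≤ 2`, the kernel `(a, b) ↦ |a - b|^p` on `ℝ` is negative definite. -/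
theorem abs_sub_rpow_negative_definite
    (p : ℝ) (hp1 : 1 ≤ p) (hp2 : p ≤ 2) :
    ∀ (n : ℕ), 1 ≤ n → ∀ (a c : Fin n → ℝ), (∑ i, c i) = 0 →
      ∑ i, ∑ j, c i * c j * |a i - a j| ^ p ≤ 0 := by
  intro n _hn a c hc
  rcases eq_or_lt_of_le hp2 with hp2' | hp2'
  · -- p = 2
    subst hp2'
    have h2 : ∀ i j : Fin n, |a i - a j| ^ (2:ℝ) = (a i - a j) ^ 2 := fun i j => by
      rw [Real.rpow_two, sq_abs]
    simp_rw [h2]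
    have expand : (∑ i, c i * (a i) ^ 2) * (∑ j, c j) + (∑ i, c i) * (∑ j, c j * (a j) ^ 2)
        - 2 * ((∑ i, c i * a i) * (∑ j, c j * a j))
        = ∑ i, ∑ j, c i * c j * (a i - a j) ^ 2 := by
      rw [Finset.sum_mul_sum, Finset.sum_mul_sum, Finset.sum_mul_sum, Finset.mul_sum,
        ← Finset.sum_add_distrib, ← Finset.sum_sub_distrib]
      refine Finset.sum_congr rfl fun i _ => ?_
      rw [Finset.mul_sum, ← Finset.sum_add_distrib, ← Finset.sum_sub_distrib]
      refine Finset.sum_congr rfl fun j _ => ?_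
      ring
    rw [← expand, hc]
    nlinarith [sq_nonneg (∑ i, c i * a i)]
  · -- 1 ≤ p < 2, integral representation
    set C : ℝ := ∫ t in Set.Ioi (0:ℝ), (1 - Real.cos t) * t ^ (-1 - p) with hC
    have hCpos : 0 < C := aux_C_pos p hp1 hp2'
    set F : Fin n → Fin n → ℝ → ℝ :=
      fun i j t => c i * c j * ((1 - Real.cos ((a i - a j) * t)) * t ^ (-1 - p)) with hF
    have hintij : ∀ i j : Fin n, IntegrableOn (F i j) (Set.Ioi 0) volume :=
      fun i j => (aux_integrable p (a i - a j) hp1 hp2').const_mul _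
    have key : C * (∑ i, ∑ j, c i * c j * |a i - a j| ^ p) ≤ 0 := by
      have step1 : C * (∑ i, ∑ j, c i * c j * |a i - a j| ^ p)
          = ∑ i, ∑ j, ∫ t in Set.Ioi (0:ℝ), F i j t := by
        rw [Finset.mul_sum]
        refine Finset.sum_congr rfl fun i _ => ?_
        rw [Finset.mul_sum]
        refine Finset.sum_congr rfl fun j _ => ?_
        rw [show C * (c i * c j * |a i - a j| ^ p) = c i * c j * (|a i - a j| ^ p * C)
          from by ring, ← aux_scale p hp1 (a i - a j), hF, ← integral_const_mul]
      rw [step1]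
      have h1 : ∀ i : Fin n, ∑ j, ∫ t in Set.Ioi (0:ℝ), F i j t
          = ∫ t in Set.Ioi (0:ℝ), ∑ j, F i j t :=
        fun i => (integral_finset_sum _ (fun j _ => hintij i j)).symm
      simp_rw [h1]
      rw [← integral_finset_sum _ (fun i _ => integrable_finset_sum _ (fun j _ => hintij i j))]
      apply setIntegral_nonpos measurableSet_Ioi
      intro t ht
      have hsplit : ∑ i, ∑ j, F i j t
          = (∑ i, ∑ j, c i * c j * (1 - Real.cos ((a i - a j) * t))) * t ^ (-1 - p) := by
        rw [Finset.sum_mul]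
        refine Finset.sum_congr rfl fun i _ => ?_
        rw [Finset.sum_mul]
        refine Finset.sum_congr rfl fun j _ => ?_
        simp only [hF]; ring
      rw [hsplit]
      exact mul_nonpos_of_nonpos_of_nonneg (aux_trig a c hc t)
        (Real.rpow_nonneg (le_of_lt ht) _)
    nlinarith [key, hCpos]
end

section
/- Let 1 ≤ p ≤ 2, let m be a positive integer, and let w_1, …, w_m ≥ 0 be nonnegative reals. Then the weighted ℓ_p distance d(x, z) := ( ∑_{e=1}^m w_e |x_e − z_e|^p )^{1/p} on ℝ^m is negative definite: for every integer n ≥ 1, all x^{(1)}, …, x^{(n)} ∈ ℝ^m and all c_1, …, c_n ∈ ℝ with ∑_{i=1}^n c_i = 0, one has ∑_{i=1}^n ∑_{j=1}^n c_i c_j ( ∑_{e=1}^m w_e |x^{(i)}_e − x^{(j)}_e|^p )^{1/p} ≤ 0. -/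
section WlpAlg
open Finset Matrix Nat

/-- A symmetric kernel with nonnegative quadratic form admits a Gram decomposition. -/
lemma wlp_decomp {n : ℕ} (K : Fin n → Fin n → ℝ)
    (hsym : ∀ i j, K i j = K j i)
    (hpsd : ∀ c : Fin n → ℝ, 0 ≤ ∑ i, ∑ j, c i * c j * K i j) :
    ∃ A : Fin n → Fin n → ℝ, ∀ i j, K i j = ∑ k, A k i * A k j := by
  have hps : (Matrix.of K).PosSemidef := by
    rw [Matrix.posSemidef_iff_dotProduct_mulVec]
    constructor
    · ext i j
      simp [Matrix.conjTranspose, hsym i j]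
    · intro c
      have heq : dotProduct (star c) ((Matrix.of K) *ᵥ c)
          = ∑ i, ∑ j, c i * c j * K i j := by
        simp only [dotProduct, Matrix.mulVec, star_trivial, Matrix.of_apply,
          Finset.mul_sum]
        exact Finset.sum_congr rfl fun i _ => Finset.sum_congr rfl fun j _ => by ring
      rw [heq]
      exact hpsd c
  obtain ⟨B, hB⟩ : ∃ B : Matrix (Fin n) (Fin n) ℝ, Matrix.of K = Bᴴ * B := by
    open MatrixOrder in
    obtain ⟨X, hX, -, hXX⟩ := CFC.exists_sqrt_of_isSelfAdjoint_of_quasispectrumRestricts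
      hps.isHermitian (QuasispectrumRestricts.nnreal_of_nonneg hps.nonneg)
    exact ⟨X, by rw [← hXX, ← Matrix.star_eq_conjTranspose, hX.star_eq]; rfl⟩
  refine ⟨fun k i => B k i, fun i j => ?_⟩
  have := congrArg (fun M => M i j) hB
  simpa [Matrix.mul_apply, Matrix.conjTranspose_apply] using this

/-- Schur product: entrywise product of PSD kernels is PSD. -/
lemma wlp_psd_mul {n : ℕ} (K L : Fin n → Fin n → ℝ)
    (hsymK : ∀ i j, K i j = K j i)
    (hK : ∀ c : Fin n → ℝ, 0 ≤ ∑ i, ∑ j, c i * c j * K i j)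
    (hL : ∀ c : Fin n → ℝ, 0 ≤ ∑ i, ∑ j, c i * c j * L i j)
    (c : Fin n → ℝ) :
    0 ≤ ∑ i, ∑ j, c i * c j * (K i j * L i j) := by
  obtain ⟨A, hA⟩ := wlp_decomp K hsymK hK
  have step1 : ∑ i, ∑ j, c i * c j * (K i j * L i j)
      = ∑ i, ∑ j, ∑ k, (c i * A k i) * (c j * A k j) * L i j := by
    refine Finset.sum_congr rfl fun i _ => Finset.sum_congr rfl fun j _ => ?_
    rw [hA, Finset.sum_mul, Finset.mul_sum]
    exact Finset.sum_congr rfl fun k _ => by ring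
  have step2 : ∑ i, ∑ j : Fin n, ∑ k, (c i * A k i) * (c j * A k j) * L i j
      = ∑ k, ∑ i, ∑ j, (c i * A k i) * (c j * A k j) * L i j := by
    rw [show (∑ i, ∑ j : Fin n, ∑ k, (c i * A k i) * (c j * A k j) * L i j)
        = ∑ i, ∑ k, ∑ j : Fin n, (c i * A k i) * (c j * A k j) * L i j from
      Finset.sum_congr rfl fun i _ => Finset.sum_comm]
    exact Finset.sum_comm
  rw [step1, step2]
  exact Finset.sum_nonneg fun k _ => hL (fun i => c i * A k i)

lemma wlp_psd_pow {n : ℕ} (K : Fin n → Fin n → ℝ)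
    (hsymK : ∀ i j, K i j = K j i)
    (hK : ∀ c : Fin n → ℝ, 0 ≤ ∑ i, ∑ j, c i * c j * K i j) :
    ∀ N : ℕ, ∀ c : Fin n → ℝ, 0 ≤ ∑ i, ∑ j, c i * c j * K i j ^ N := by
  intro N
  induction N with
  | zero =>
      intro c
      simp only [pow_zero, mul_one]
      have : ∑ i, ∑ j, c i * c j = (∑ i, c i) ^ 2 := by
        rw [sq, Finset.sum_mul_sum]
      rw [this]; positivity
  | succ N ih =>
      intro c
      have h := wlp_psd_mul K (fun i j => K i j ^ N) hsymK hK ih c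
      simpa [pow_succ, mul_comm] using h

lemma wlp_psd_exp {n : ℕ} (K : Fin n → Fin n → ℝ)
    (hsymK : ∀ i j, K i j = K j i)
    (hK : ∀ c : Fin n → ℝ, 0 ≤ ∑ i, ∑ j, c i * c j * K i j)
    (c : Fin n → ℝ) :
    0 ≤ ∑ i, ∑ j, c i * c j * Real.exp (K i j) := by
  have hexp : ∀ x : ℝ, Real.exp x = ∑' N : ℕ, x ^ N / N ! := by
    intro x
    rw [Real.exp_eq_exp_ℝ, NormedSpace.exp_eq_tsum_div]
  have hsummable : ∀ (a : ℝ) (x : ℝ), Summable (fun N : ℕ => a * (x ^ N / N !)) :=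
    fun a x => (Real.summable_pow_div_factorial x).mul_left a
  have key : ∑' N : ℕ, ∑ i, ∑ j, c i * c j * (K i j ^ N / N !)
      = ∑ i, ∑ j, c i * c j * Real.exp (K i j) := by
    rw [Summable.tsum_finsetSum (fun i _ => summable_sum (fun j _ => hsummable _ _))]
    refine Finset.sum_congr rfl fun i _ => ?_
    rw [Summable.tsum_finsetSum (fun j _ => hsummable _ _)]
    refine Finset.sum_congr rfl fun j _ => ?_
    rw [tsum_mul_left, hexp]
  rw [← key]
  refine tsum_nonneg fun N => ?_
  have : ∑ i, ∑ j, c i * c j * (K i j ^ N / N !)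
      = (∑ i, ∑ j, c i * c j * K i j ^ N) / N ! := by
    rw [Finset.sum_div]
    exact Finset.sum_congr rfl fun i _ => by rw [Finset.sum_div]; exact Finset.sum_congr rfl fun j _ => by ring
  rw [this]
  exact div_nonneg (wlp_psd_pow K hsymK hK N c) (by positivity)

/-- Schoenberg: exp of minus a conditionally negative definite kernel (vanishing on the
diagonal, symmetric) is positive semidefinite. -/
lemma wlp_negdef_exp {n : ℕ} (hn : 0 < n) (K : Fin n → Fin n → ℝ)
    (hsym : ∀ i j, K i j = K j i) (hdiag : ∀ i, K i i = 0)
    (hneg : ∀ c : Fin n → ℝ, (∑ i, c i) = 0 → ∑ i, ∑ j, c i * c j * K i j ≤ 0)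
    (c : Fin n → ℝ) :
    0 ≤ ∑ i, ∑ j, c i * c j * Real.exp (-K i j) := by
  have i0 : Fin n := ⟨0, hn⟩
  set g : Fin n → Fin n → ℝ := fun i j => K i i0 + K j i0 - K i j with hg
  have hgsym : ∀ i j, g i j = g j i := fun i j => by simp [hg, hsym i j]; ring
  have hgpsd : ∀ d : Fin n → ℝ, 0 ≤ ∑ i, ∑ j, d i * d j * g i j := by
    intro d
    set S := ∑ i, d i with hS
    set d' : Fin n → ℝ := fun i => d i - (if i = i0 then S else 0) with hd'
    have hsum0 : (∑ i, d' i) = 0 := by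
      simp [hd', Finset.sum_sub_distrib, Finset.sum_ite_eq', hS]
    have h1 := hneg d' hsum0
    -- expand
    have hexpand : ∑ i, ∑ j, d' i * d' j * K i j
        = (∑ i, ∑ j, d i * d j * K i j) - 2 * S * (∑ i, d i * K i i0) := by
      have : ∀ i j, d' i * d' j * K i j
          = d i * d j * K i j - (if j = i0 then S * (d i * K i j) else 0)
            - (if i = i0 then S * (d j * K i j) else 0)
            + (if i = i0 then (if j = i0 then S * S * K i j else 0) else 0) := by
        intro i j
        by_cases h1 : i = i0 <;> by_cases h2 : j = i0 <;> simp [hd', h1, h2] <;> ring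
      simp only [this, Finset.sum_add_distrib, Finset.sum_sub_distrib, Finset.sum_ite_eq',
        Finset.mem_univ, if_true, hdiag i0]
      have e3 : (∑ x : Fin n, ∑ x_1 : Fin n, if x = i0 then S * (d x_1 * K x x_1) else 0)
          = ∑ x_1 : Fin n, S * (d x_1 * K i0 x_1) := by
        rw [Finset.sum_comm]
        refine Finset.sum_congr rfl fun j _ => ?_
        simp [Finset.sum_ite_eq']
      have e4 : (∑ x : Fin n, ∑ x_1 : Fin n,
          if x = i0 then if x_1 = i0 then S * S * K x x_1 else 0 else 0) = 0 := by
        simp [Finset.sum_ite_eq', hdiag i0]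
      have e1 : ∑ x : Fin n, S * (d x * K x i0) = S * ∑ i, d i * K i i0 := by
        rw [Finset.mul_sum]
      have e2 : ∑ x : Fin n, S * (d x * K i0 x) = S * ∑ i, d i * K i i0 := by
        rw [Finset.mul_sum]; exact Finset.sum_congr rfl fun j _ => by rw [hsym i0 j]
      rw [e3, e4, e1, e2]; ring
    have hQ : ∑ i, ∑ j, d i * d j * K i j ≤ 2 * S * (∑ i, d i * K i i0) := by linarith
    have : ∑ i, ∑ j, d i * d j * g i j
        = 2 * S * (∑ i, d i * K i i0) - ∑ i, ∑ j, d i * d j * K i j := by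
      simp only [hg, mul_sub, mul_add, Finset.sum_sub_distrib, Finset.sum_add_distrib]
      have e1 : ∑ i, ∑ j, d i * d j * K i i0 = S * ∑ i, d i * K i i0 := by
        rw [Finset.sum_comm, hS, Finset.sum_mul]
        refine Finset.sum_congr rfl fun j _ => ?_
        rw [Finset.mul_sum]
        refine Finset.sum_congr rfl fun i _ => by ring
      have e2 : ∑ i, ∑ j, d i * d j * K j i0 = S * ∑ i, d i * K i i0 := by
        rw [hS, Finset.sum_mul]
        refine Finset.sum_congr rfl fun i _ => ?_
        rw [Finset.mul_sum]
        refine Finset.sum_congr rfl fun j _ => by ring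
      rw [e1, e2]; ring
    rw [this]; linarith
  -- now exp(-K i j) = exp(-K i i0) * exp(-K j i0) * exp (g i j)
  have hfact : ∀ i j, Real.exp (-K i j)
      = (Real.exp (-K i i0)) * (Real.exp (-K j i0)) * Real.exp (g i j) := by
    intro i j
    rw [← Real.exp_add, ← Real.exp_add]
    congr 1
    show -K i j = -K i i0 + -K j i0 + (K i i0 + K j i0 - K i j)
    ring
  have := wlp_psd_exp g hgsym hgpsd (fun i => c i * Real.exp (-K i i0))
  calc (0:ℝ) ≤ ∑ i, ∑ j, (c i * Real.exp (-K i i0)) * (c j * Real.exp (-K j i0)) * Real.exp (g i j) := this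
    _ = ∑ i, ∑ j, c i * c j * Real.exp (-K i j) := by
        refine Finset.sum_congr rfl fun i _ => Finset.sum_congr rfl fun j _ => ?_
        rw [hfact i j]; ring

end WlpAlg

section WlpInt
open Set MeasureTheory Real
open scoped ENNReal NNReal

/-- Generic integrability of `s ↦ f (b s) · s^(-1-q)` on `(0,∞)`. -/
lemma wlp_integrable (q : ℝ) (hq0 : 0 < q) (κ : ℕ) (hqκ : q < κ)
    (M L : ℝ) (f : ℝ → ℝ) (hf : Continuous f)
    (hf0 : ∀ u, 0 ≤ u → 0 ≤ f u) (hfM : ∀ u, 0 ≤ u → f u ≤ M)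
    (hfL : ∀ u, 0 ≤ u → f u ≤ L * u ^ κ)
    (b : ℝ) (hb : 0 ≤ b) :
    IntegrableOn (fun s => f (b * s) * s ^ (-1 - q)) (Ioi 0) := by
  have hmeas : AEStronglyMeasurable (fun s => f (b * s) * s ^ (-1 - q))
      (volume.restrict (Ioi 0)) := by
    have h1 : ContinuousOn (fun s : ℝ => s ^ (-1 - q)) (Ioi 0) := fun s hs =>
      (Real.continuousAt_rpow_const s _ (Or.inl (ne_of_gt hs))).continuousWithinAt
    exact (((hf.comp (continuous_const.mul continuous_id)).continuousOn.mul h1)).aestronglyMeasurable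
      measurableSet_Ioi
  rw [← Set.Ioc_union_Ioi_eq_Ioi (zero_le_one (α := ℝ)), integrableOn_union]
  constructor
  · -- on (0,1]
    have hint : IntegrableOn (fun s : ℝ => (L * b ^ κ) * s ^ ((κ : ℝ) - 1 - q)) (Ioc 0 1) := by
      rw [integrableOn_Ioc_iff_integrableOn_Ioo]
      exact ((intervalIntegral.integrableOn_Ioo_rpow_iff one_pos).mpr (by norm_num; linarith)).const_mul _
    refine hint.integrable.mono (hmeas.mono_set Ioc_subset_Ioi_self) ?_
    refine (ae_restrict_iff' measurableSet_Ioc).mpr (Filter.Eventually.of_forall fun s hs => ?_)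
    have hs0 : 0 < s := hs.1
    have hbs : 0 ≤ b * s := mul_nonneg hb hs0.le
    have hrp : (0:ℝ) < s ^ (-1 - q) := Real.rpow_pos_of_pos hs0 _
    have h1 : ‖f (b * s) * s ^ (-1 - q)‖ = f (b * s) * s ^ (-1 - q) := by
      rw [Real.norm_eq_abs, abs_of_nonneg (mul_nonneg (hf0 _ hbs) hrp.le)]
    rw [h1, Real.norm_eq_abs]
    have h2 : f (b * s) * s ^ (-1 - q) ≤ (L * b ^ κ) * s ^ ((κ : ℝ) - 1 - q) := by
      have := hfL (b * s) hbs
      have key : (b * s) ^ κ * s ^ (-1 - q) = b ^ κ * s ^ ((κ : ℝ) - 1 - q) := by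
        rw [mul_pow, mul_assoc]
        congr 1
        rw [← Real.rpow_natCast s κ, ← Real.rpow_add hs0]
        congr 1; ring
      calc f (b * s) * s ^ (-1 - q) ≤ (L * (b * s) ^ κ) * s ^ (-1 - q) := by
            exact mul_le_mul_of_nonneg_right this hrp.le
        _ = (L * b ^ κ) * s ^ ((κ : ℝ) - 1 - q) := by rw [mul_assoc, key]; ring
    exact h2.trans (le_abs_self _)
  · -- on (1,∞)
    have hint : IntegrableOn (fun s : ℝ => M * s ^ (-1 - q)) (Ioi 1) :=
      (integrableOn_Ioi_rpow_of_lt (by linarith) one_pos).const_mul M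
    refine hint.integrable.mono (hmeas.mono_set (Ioi_subset_Ioi zero_le_one)) ?_
    refine (ae_restrict_iff' measurableSet_Ioi).mpr (Filter.Eventually.of_forall fun s hs => ?_)
    have hs0 : (0:ℝ) < s := lt_trans one_pos hs
    have hbs : 0 ≤ b * s := mul_nonneg hb hs0.le
    have hrp : (0:ℝ) < s ^ (-1 - q) := Real.rpow_pos_of_pos hs0 _
    rw [Real.norm_eq_abs, Real.norm_eq_abs, abs_of_nonneg (mul_nonneg (hf0 _ hbs) hrp.le)]
    exact le_trans (mul_le_mul_of_nonneg_right (hfM _ hbs) hrp.le) (le_abs_self _)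

/-- Scaling: `∫_0^∞ f(bs) s^(-1-q) ds = b^q ∫_0^∞ f(u) u^(-1-q) du` for `b > 0`. -/
lemma wlp_scale (q : ℝ) (f : ℝ → ℝ) (b : ℝ) (hb : 0 < b) :
    ∫ s in Ioi (0:ℝ), f (b * s) * s ^ (-1 - q)
      = b ^ q * ∫ u in Ioi (0:ℝ), f u * u ^ (-1 - q) := by
  have h1 : (∫ s in Ioi (0:ℝ), (fun u => f u * u ^ (-1 - q)) (b * s))
      = b⁻¹ • ∫ u in Ioi (b * 0), f u * u ^ (-1 - q) :=
    integral_comp_mul_left_Ioi (fun u => f u * u ^ (-1 - q)) 0 hb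
  have h2 : ∫ s in Ioi (0:ℝ), f (b * s) * s ^ (-1 - q)
      = ∫ s in Ioi (0:ℝ), b ^ (1 + q) * (f (b * s) * (b * s) ^ (-1 - q)) := by
    refine setIntegral_congr_fun measurableSet_Ioi fun s hs => ?_
    have hs0 : (0:ℝ) < s := hs
    rw [Real.mul_rpow hb.le hs0.le]
    rw [show b ^ (1 + q) * (f (b * s) * (b ^ (-1 - q) * s ^ (-1 - q)))
        = (b ^ (1 + q) * b ^ (-1 - q)) * (f (b * s) * s ^ (-1 - q)) by ring]
    rw [← Real.rpow_add hb]
    norm_num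
  rw [h2, integral_const_mul, h1, mul_zero, smul_eq_mul]
  rw [← mul_assoc]
  congr 1
  rw [Real.rpow_add hb, Real.rpow_one]
  field_simp

lemma wlp_cos_abs (b s : ℝ) (hs : 0 < s) : Real.cos (|b| * s) = Real.cos (b * s) := by
  rw [show |b| * s = |b * s| by rw [abs_mul, abs_of_pos hs], Real.cos_abs]

lemma wlp_int_cos (p : ℝ) (hp0 : 0 < p) (hp2 : p < 2) (b : ℝ) :
    IntegrableOn (fun s => (1 - Real.cos (b * s)) * s ^ (-1 - p)) (Ioi 0) := by
  have base := wlp_integrable p hp0 2 (by exact_mod_cast hp2) 2 (1/2)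
    (fun u => 1 - Real.cos u) (continuous_const.sub Real.continuous_cos)
    (fun u _ => by show (0:ℝ) ≤ 1 - Real.cos u; nlinarith [Real.cos_le_one u])
    (fun u _ => by show 1 - Real.cos u ≤ 2; nlinarith [Real.neg_one_le_cos u])
    (fun u _ => by show 1 - Real.cos u ≤ 1/2 * u ^ 2; nlinarith [Real.one_sub_sq_div_two_le_cos (x := u)])
    |b| (abs_nonneg b)
  refine base.congr_fun (fun s hs => ?_) measurableSet_Ioi
  simp only [wlp_cos_abs b s hs]

lemma wlp_int_exp (α : ℝ) (h0 : 0 < α) (h1 : α < 1) (a : ℝ) (ha : 0 ≤ a) :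
    IntegrableOn (fun t => (1 - Real.exp (-(a * t))) * t ^ (-1 - α)) (Ioi 0) := by
  have base := wlp_integrable α h0 1 (by exact_mod_cast h1) 1 1
    (fun u => 1 - Real.exp (-u)) (continuous_const.sub (Real.continuous_exp.comp continuous_neg))
    (fun u hu => by
      have : Real.exp (-u) ≤ Real.exp 0 := Real.exp_le_exp.mpr (by linarith)
      rw [Real.exp_zero] at this
      show (0:ℝ) ≤ 1 - Real.exp (-u); linarith)
    (fun u _ => by show 1 - Real.exp (-u) ≤ 1; linarith [Real.exp_pos (-u)])
    (fun u hu => by show 1 - Real.exp (-u) ≤ 1 * u ^ 1; have := Real.add_one_le_exp (-u); rw [pow_one]; linarith)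
    a ha
  exact base

lemma wlp_Cpos (p : ℝ) (hp0 : 0 < p) (hp2 : p < 2) :
    0 < ∫ u in Ioi (0:ℝ), (1 - Real.cos u) * u ^ (-1 - p) := by
  have hi : IntegrableOn (fun u : ℝ => (1 - Real.cos u) * u ^ (-1 - p)) (Ioi 0) := by
    have := wlp_int_cos p hp0 hp2 1
    simpa using this
  rw [setIntegral_pos_iff_support_of_nonneg_ae ?hnn hi]
  case hnn =>
    refine (ae_restrict_iff' measurableSet_Ioi).mpr (Filter.Eventually.of_forall fun u hu => ?_)
    exact mul_nonneg (by linarith [Real.cos_le_one u]) (Real.rpow_nonneg (le_of_lt hu) _)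
  refine lt_of_lt_of_le (b := volume (Ioo (0:ℝ) Real.pi)) ?_ (measure_mono ?_)
  · rw [Real.volume_Ioo]
    exact ENNReal.ofReal_pos.mpr (by linarith [Real.pi_pos])
  · intro u hu
    refine ⟨?_, hu.1⟩
    have hcos : Real.cos u < 1 := by
      have := Real.cos_lt_cos_of_nonneg_of_le_pi (le_refl 0) hu.2.le hu.1
      rwa [Real.cos_zero] at this
    exact ne_of_gt (mul_pos (by linarith) (Real.rpow_pos_of_pos hu.1 _))

lemma wlp_Dpos (α : ℝ) (h0 : 0 < α) (h1 : α < 1) :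
    0 < ∫ u in Ioi (0:ℝ), (1 - Real.exp (-u)) * u ^ (-1 - α) := by
  have hi : IntegrableOn (fun u : ℝ => (1 - Real.exp (-u)) * u ^ (-1 - α)) (Ioi 0) := by
    have := wlp_int_exp α h0 h1 1 zero_le_one
    simpa using this
  rw [setIntegral_pos_iff_support_of_nonneg_ae ?hnn hi]
  case hnn =>
    refine (ae_restrict_iff' measurableSet_Ioi).mpr (Filter.Eventually.of_forall fun u hu => ?_)
    have : Real.exp (-u) ≤ Real.exp 0 := Real.exp_le_exp.mpr (by simpa using le_of_lt hu)
    rw [Real.exp_zero] at this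
    exact mul_nonneg (by linarith) (Real.rpow_nonneg (le_of_lt hu) _)
  refine lt_of_lt_of_le (b := volume (Ioo (0:ℝ) 1)) ?_ (measure_mono ?_)
  · rw [Real.volume_Ioo]
    norm_num
  · intro u hu
    refine ⟨?_, hu.1⟩
    have : Real.exp (-u) < Real.exp 0 := Real.exp_lt_exp.mpr (by linarith [hu.1])
    rw [Real.exp_zero] at this
    exact ne_of_gt (mul_pos (by linarith) (Real.rpow_pos_of_pos hu.1 _))

lemma wlp_cos_rep (p : ℝ) (hp0 : 0 < p) (b : ℝ) :
    ∫ s in Ioi (0:ℝ), (1 - Real.cos (b * s)) * s ^ (-1 - p)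
      = |b| ^ p * ∫ u in Ioi (0:ℝ), (1 - Real.cos u) * u ^ (-1 - p) := by
  rcases eq_or_ne b 0 with rfl | hne
  · simp [Real.zero_rpow hp0.ne']
  · have hb : 0 < |b| := abs_pos.mpr hne
    have hcongr : ∫ s in Ioi (0:ℝ), (1 - Real.cos (b * s)) * s ^ (-1 - p)
        = ∫ s in Ioi (0:ℝ), (fun u => 1 - Real.cos u) (|b| * s) * s ^ (-1 - p) :=
      setIntegral_congr_fun measurableSet_Ioi fun s hs => by
        simp only [wlp_cos_abs b s hs]
    rw [hcongr, wlp_scale p (fun u => 1 - Real.cos u) |b| hb]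

lemma wlp_exp_rep (α : ℝ) (h0 : 0 < α) (a : ℝ) (ha : 0 ≤ a) :
    ∫ t in Ioi (0:ℝ), (1 - Real.exp (-(a * t))) * t ^ (-1 - α)
      = a ^ α * ∫ u in Ioi (0:ℝ), (1 - Real.exp (-u)) * u ^ (-1 - α) := by
  rcases eq_or_lt_of_le ha with rfl | hpos
  · simp [Real.zero_rpow h0.ne']
  · exact wlp_scale α (fun u => 1 - Real.exp (-u)) a hpos

end WlpInt

section WlpMain
open Set MeasureTheory Real Finset

/-- `|s - t|^p` is negative definite on `ℝ` for `1 ≤ p ≤ 2`. -/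
lemma wlp_negdef_abs_rpow (p : ℝ) (hp1 : 1 ≤ p) (hp2 : p ≤ 2) {n : ℕ}
    (t : Fin n → ℝ) (c : Fin n → ℝ) (hc : (∑ i, c i) = 0) :
    ∑ i, ∑ j, c i * c j * |t i - t j| ^ p ≤ 0 := by
  have hp0 : (0:ℝ) < p := by linarith
  rcases lt_or_eq_of_le hp2 with hlt | rfl
  · -- 1 ≤ p < 2 : integral representation with cosine
    set C := ∫ u in Ioi (0:ℝ), (1 - Real.cos u) * u ^ (-1 - p) with hCdef
    have hC : 0 < C := wlp_Cpos p hp0 hlt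
    have key : (∑ i, ∑ j, c i * c j * |t i - t j| ^ p) * C
        = ∫ s in Ioi (0:ℝ), ∑ i, ∑ j,
            c i * c j * ((1 - Real.cos ((t i - t j) * s)) * s ^ (-1 - p)) := by
      rw [integral_finset_sum _ (fun i _ => integrable_finset_sum _
        (fun j _ => ((wlp_int_cos p hp0 hlt (t i - t j)).const_mul (c i * c j))))]
      rw [Finset.sum_mul]
      refine Finset.sum_congr rfl fun i _ => ?_
      rw [integral_finset_sum _ (fun j _ => ((wlp_int_cos p hp0 hlt (t i - t j)).const_mul (c i * c j)))]
      rw [Finset.sum_mul]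
      refine Finset.sum_congr rfl fun j _ => ?_
      rw [integral_const_mul, mul_assoc, ← wlp_cos_rep p hp0 (t i - t j)]
    have hnonpos : ∫ s in Ioi (0:ℝ), ∑ i, ∑ j,
        c i * c j * ((1 - Real.cos ((t i - t j) * s)) * s ^ (-1 - p)) ≤ 0 := by
      refine setIntegral_nonpos measurableSet_Ioi fun s hs => ?_
      have hs0 : (0:ℝ) < s := hs
      have hfact : ∑ i, ∑ j, c i * c j * ((1 - Real.cos ((t i - t j) * s)) * s ^ (-1 - p))
          = (∑ i, ∑ j, c i * c j * (1 - Real.cos ((t i - t j) * s))) * s ^ (-1 - p) := by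
        rw [Finset.sum_mul]
        refine Finset.sum_congr rfl fun i _ => ?_
        rw [Finset.sum_mul]
        exact Finset.sum_congr rfl fun j _ => by ring
      rw [hfact]
      refine mul_nonpos_of_nonpos_of_nonneg ?_ (Real.rpow_nonneg hs0.le _)
      -- ∑∑ cᵢcⱼ(1 - cos((tᵢ-tⱼ)s)) = -((∑ c cos)² + (∑ c sin)²)
      have expand : ∀ i j, c i * c j * (1 - Real.cos ((t i - t j) * s))
          = c i * c j - ((c i * Real.cos (t i * s)) * (c j * Real.cos (t j * s))
            + (c i * Real.sin (t i * s)) * (c j * Real.sin (t j * s))) := by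
        intro i j
        rw [sub_mul, Real.cos_sub]
        ring
      simp only [expand, Finset.sum_sub_distrib, Finset.sum_add_distrib,
        ← Finset.sum_mul, ← Finset.mul_sum]
      rw [hc]
      have h1 : (0:ℝ) ≤ (∑ i, c i * Real.cos (t i * s)) * (∑ i, c i * Real.cos (t i * s)) :=
        mul_self_nonneg _
      have h2 : (0:ℝ) ≤ (∑ i, c i * Real.sin (t i * s)) * (∑ i, c i * Real.sin (t i * s)) :=
        mul_self_nonneg _
      linarith
    have := key ▸ hnonpos
    have hfin : (∑ i, ∑ j, c i * c j * |t i - t j| ^ p) * C ≤ 0 * C := by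
      rw [zero_mul]; exact this
    exact le_of_mul_le_mul_right hfin hC
  · -- p = 2
    have habs : ∀ i j, c i * c j * |t i - t j| ^ (2:ℝ)
        = (c i * t i ^ 2) * c j + c i * (c j * t j ^ 2) - 2 * ((c i * t i) * (c j * t j)) := by
      intro i j
      rw [show ((2:ℝ)) = ((2:ℕ):ℝ) by norm_num, Real.rpow_natCast, sq_abs]
      ring
    simp only [habs, Finset.sum_sub_distrib, Finset.sum_add_distrib,
      ← Finset.sum_mul, ← Finset.mul_sum]
    rw [hc]
    have h3 : (0:ℝ) ≤ (∑ i, c i * t i) * (∑ i, c i * t i) := mul_self_nonneg _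
    linarith [Finset.sum_mul (Finset.univ) (fun i => c i * t i ^ 2) (0:ℝ)]

/-- For `1 ≤ p ≤ 2` and nonnegative weights, the weighted `ℓ_p` distance
`(x, z) ↦ (∑_e w_e |x_e - z_e|^p)^{1/p}` on `ℝ^m` is negative definite. -/
theorem weighted_lp_dist_negative_definite
    (p : ℝ) (hp1 : 1 ≤ p) (hp2 : p ≤ 2)
    (m : ℕ) (hm : 0 < m) (w : Fin m → ℝ) (hw : ∀ e, 0 ≤ w e) :
    ∀ (n : ℕ), 1 ≤ n → ∀ (x : Fin n → Fin m → ℝ) (c : Fin n → ℝ), (∑ i, c i) = 0 →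
      ∑ i, ∑ j, c i * c j * (∑ e, w e * |x i e - x j e| ^ p) ^ (1 / p) ≤ 0 := by
  intro n hn x c hc
  have hp0 : (0:ℝ) < p := by linarith
  set k : Fin n → Fin n → ℝ := fun i j => ∑ e, w e * |x i e - x j e| ^ p with hk
  have hk0 : ∀ i j, 0 ≤ k i j := fun i j =>
    Finset.sum_nonneg fun e _ => mul_nonneg (hw e) (Real.rpow_nonneg (abs_nonneg _) _)
  have hsym : ∀ i j, k i j = k j i := fun i j =>
    Finset.sum_congr rfl fun e _ => by rw [abs_sub_comm]
  have hdiag : ∀ i, k i i = 0 := fun i => by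
    simp [hk, Real.zero_rpow hp0.ne']
  have hneg : ∀ d : Fin n → ℝ, (∑ i, d i) = 0 → ∑ i, ∑ j, d i * d j * k i j ≤ 0 := by
    intro d hd
    have swap : ∑ i, ∑ j, d i * d j * k i j
        = ∑ e, w e * ∑ i, ∑ j, d i * d j * |x i e - x j e| ^ p := by
      have step1 : ∑ i, ∑ j, d i * d j * k i j
          = ∑ i, ∑ j, ∑ e, w e * (d i * d j * |x i e - x j e| ^ p) := by
        refine Finset.sum_congr rfl fun i _ => Finset.sum_congr rfl fun j _ => ?_
        rw [hk, Finset.mul_sum]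
        exact Finset.sum_congr rfl fun e _ => by ring
      rw [step1]
      rw [show (∑ i, ∑ j : Fin n, ∑ e, w e * (d i * d j * |x i e - x j e| ^ p))
          = ∑ i, ∑ e, ∑ j : Fin n, w e * (d i * d j * |x i e - x j e| ^ p) from
        Finset.sum_congr rfl fun i _ => Finset.sum_comm]
      rw [show (∑ i, ∑ e, ∑ j : Fin n, w e * (d i * d j * |x i e - x j e| ^ p))
          = ∑ e, ∑ i, ∑ j : Fin n, w e * (d i * d j * |x i e - x j e| ^ p) from
        Finset.sum_comm]
      refine Finset.sum_congr rfl fun e _ => ?_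
      rw [Finset.mul_sum]
      refine Finset.sum_congr rfl fun i _ => ?_
      rw [Finset.mul_sum]
    rw [swap]
    refine Finset.sum_nonpos fun e _ => ?_
    exact mul_nonpos_of_nonneg_of_nonpos (hw e)
      (wlp_negdef_abs_rpow p hp1 hp2 (fun i => x i e) d hd)
  rcases lt_or_eq_of_le hp1 with hlt | rfl
  · -- 1 < p
    set α : ℝ := 1 / p with hα
    have h0 : 0 < α := by positivity
    have h1 : α < 1 := by rw [hα, div_lt_one hp0]; exact hlt
    set D := ∫ u in Ioi (0:ℝ), (1 - Real.exp (-u)) * u ^ (-1 - α) with hDdef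
    have hD : 0 < D := wlp_Dpos α h0 h1
    have key : (∑ i, ∑ j, c i * c j * k i j ^ α) * D
        = ∫ s in Ioi (0:ℝ), ∑ i, ∑ j,
            c i * c j * ((1 - Real.exp (-(k i j * s))) * s ^ (-1 - α)) := by
      rw [integral_finset_sum _ (fun i _ => integrable_finset_sum _
        (fun j _ => ((wlp_int_exp α h0 h1 (k i j) (hk0 i j)).const_mul (c i * c j))))]
      rw [Finset.sum_mul]
      refine Finset.sum_congr rfl fun i _ => ?_
      rw [integral_finset_sum _
        (fun j _ => ((wlp_int_exp α h0 h1 (k i j) (hk0 i j)).const_mul (c i * c j)))]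
      rw [Finset.sum_mul]
      refine Finset.sum_congr rfl fun j _ => ?_
      rw [integral_const_mul, mul_assoc, ← wlp_exp_rep α h0 (k i j) (hk0 i j)]
    have hnonpos : ∫ s in Ioi (0:ℝ), ∑ i, ∑ j,
        c i * c j * ((1 - Real.exp (-(k i j * s))) * s ^ (-1 - α)) ≤ 0 := by
      refine setIntegral_nonpos measurableSet_Ioi fun s hs => ?_
      have hs0 : (0:ℝ) < s := hs
      have hfact : ∑ i, ∑ j, c i * c j * ((1 - Real.exp (-(k i j * s))) * s ^ (-1 - α))
          = (∑ i, ∑ j, c i * c j * (1 - Real.exp (-(k i j * s)))) * s ^ (-1 - α) := by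
        rw [Finset.sum_mul]
        refine Finset.sum_congr rfl fun i _ => ?_
        rw [Finset.sum_mul]
        exact Finset.sum_congr rfl fun j _ => by ring
      rw [hfact]
      refine mul_nonpos_of_nonpos_of_nonneg ?_ (Real.rpow_nonneg hs0.le _)
      have hKexp : 0 ≤ ∑ i, ∑ j, c i * c j * Real.exp (-(k i j * s)) := by
        have := wlp_negdef_exp (by omega : 0 < n) (fun i j => k i j * s)
          (fun i j => by show k i j * s = k j i * s; rw [hsym i j])
          (fun i => by show k i i * s = 0; rw [hdiag i, zero_mul])
          (fun d hd => ?_) c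
        · exact this
        · show ∑ i, ∑ j, d i * d j * (k i j * s) ≤ 0
          have hsum : ∑ i, ∑ j, d i * d j * (k i j * s)
              = (∑ i, ∑ j, d i * d j * k i j) * s := by
            rw [Finset.sum_mul]
            refine Finset.sum_congr rfl fun i _ => ?_
            rw [Finset.sum_mul]
            exact Finset.sum_congr rfl fun j _ => by ring
          rw [hsum]
          exact mul_nonpos_of_nonpos_of_nonneg (hneg d hd) hs0.le
      have expand : ∀ i j, c i * c j * (1 - Real.exp (-(k i j * s)))
          = c i * c j - c i * c j * Real.exp (-(k i j * s)) := fun i j => by ring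
      simp only [expand, Finset.sum_sub_distrib, ← Finset.sum_mul, ← Finset.mul_sum]
      rw [hc]
      linarith
    have := key ▸ hnonpos
    have hfin : (∑ i, ∑ j, c i * c j * k i j ^ α) * D ≤ 0 * D := by
      rw [zero_mul]; exact this
    exact le_of_mul_le_mul_right hfin hD
  · -- p = 1
    have := hneg c hc
    simp only [hk, Real.rpow_one] at this
    simpa only [one_div_one, Real.rpow_one] using this

end WlpMain
end

section
/- Let 1 ≤ p ≤ 2, let t > 0, let m be a positive integer, and let w_1, …, w_m ≥ 0 be nonnegative reals. Then the kernel K(x, z) := exp( −t ∑_{e=1}^m w_e |x_e − z_e|^p ) on ℝ^m is positive definite: for every integer n ≥ 1, all x^{(1)}, …, x^{(n)} ∈ ℝ^m and all c_1, …, c_n ∈ ℝ, one has ∑_{i=1}^n ∑_{j=1}^n c_i c_j exp( −t ∑_{e=1}^m w_e |x^{(i)}_e − x^{(j)}_e|^p ) ≥ 0. -/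
open MeasureTheory Set Real

lemma one_sub_cos_le_half_sq (x : ℝ) : 1 - Real.cos x ≤ x ^ 2 / 2 := by
  have h1 : Real.cos (2 * (x/2)) = 2 * Real.cos (x/2) ^ 2 - 1 := Real.cos_two_mul (x/2)
  have h2 : Real.sin (x/2) ^ 2 + Real.cos (x/2) ^ 2 = 1 := Real.sin_sq_add_cos_sq (x/2)
  have h3 : Real.sin (x/2) ^ 2 ≤ (x/2) ^ 2 := by
    have h := Real.abs_sin_le_abs (x := x/2)
    nlinarith [abs_nonneg (Real.sin (x/2)), sq_abs (Real.sin (x/2)), sq_abs (x/2)]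
  have hx : 2 * (x/2) = x := by ring
  rw [hx] at h1
  nlinarith

lemma contOn_kernel (p : ℝ) (u : ℝ) :
    ContinuousOn (fun s : ℝ => (1 - Real.cos (u * s)) * s ^ (-1 - p)) (Ioi 0) := by
  apply ContinuousOn.mul
  · exact (continuous_const.sub (Real.continuous_cos.comp (continuous_const.mul continuous_id))).continuousOn
  · intro s hs
    exact (Real.continuousAt_rpow_const s _ (Or.inl (ne_of_gt hs))).continuousWithinAt

lemma integrable_kernel (p : ℝ) (hp1 : 1 ≤ p) (hp2 : p < 2) :
    IntegrableOn (fun s : ℝ => (1 - Real.cos s) * s ^ (-1 - p)) (Ioi 0) := by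
  have hmeas : AEStronglyMeasurable (fun s : ℝ => (1 - Real.cos s) * s ^ (-1 - p))
      (volume.restrict (Ioi (0:ℝ))) := by
    have := contOn_kernel p 1
    simp only [one_mul] at this
    exact this.aestronglyMeasurable measurableSet_Ioi
  have hIoc : IntegrableOn (fun s : ℝ => (1 - Real.cos s) * s ^ (-1 - p)) (Ioc 0 1) := by
    have hint : IntegrableOn (fun s : ℝ => s ^ (1 - p) / 2) (Ioo (0:ℝ) 2) :=
      ((intervalIntegral.integrableOn_Ioo_rpow_iff two_pos).2 (by linarith)).div_const 2
    have hsub : Ioc (0:ℝ) 1 ⊆ Ioo 0 2 := fun x hx => ⟨hx.1, lt_of_le_of_lt hx.2 one_lt_two⟩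
    refine Integrable.mono' (hint.mono_set hsub)
      (hmeas.mono_measure (Measure.restrict_mono Set.Ioc_subset_Ioi_self le_rfl)) ?_
    filter_upwards [ae_restrict_mem measurableSet_Ioc] with s hs
    have hs0 : (0:ℝ) < s := hs.1
    have hrp : (0:ℝ) ≤ s ^ (-1 - p) := Real.rpow_nonneg hs0.le _
    have hcos : (0:ℝ) ≤ 1 - Real.cos s := by linarith [Real.cos_le_one s]
    rw [Real.norm_of_nonneg (mul_nonneg hcos hrp)]
    calc (1 - Real.cos s) * s ^ (-1 - p) ≤ (s ^ 2 / 2) * s ^ (-1 - p) := by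
          exact mul_le_mul_of_nonneg_right (one_sub_cos_le_half_sq s) hrp
      _ = s ^ (1 - p) / 2 := by
          rw [div_mul_eq_mul_div, ← Real.rpow_two, ← Real.rpow_add hs0,
            show (2:ℝ) + (-1 - p) = 1 - p by ring]
  have hIoi : IntegrableOn (fun s : ℝ => (1 - Real.cos s) * s ^ (-1 - p)) (Ioi 1) := by
    have hint : IntegrableOn (fun s : ℝ => 2 * s ^ (-1 - p)) (Ioi (1:ℝ)) :=
      (integrableOn_Ioi_rpow_of_lt (by linarith) one_pos).const_mul 2
    refine Integrable.mono' hint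
      (hmeas.mono_measure (Measure.restrict_mono (Set.Ioi_subset_Ioi zero_le_one) le_rfl)) ?_
    filter_upwards [ae_restrict_mem measurableSet_Ioi] with s hs
    have hs0 : (0:ℝ) < s := lt_trans one_pos hs
    have hrp : (0:ℝ) ≤ s ^ (-1 - p) := Real.rpow_nonneg hs0.le _
    have hcos : (0:ℝ) ≤ 1 - Real.cos s := by linarith [Real.cos_le_one s]
    rw [Real.norm_of_nonneg (mul_nonneg hcos hrp)]
    have : 1 - Real.cos s ≤ 2 := by linarith [Real.neg_one_le_cos s]
    exact mul_le_mul_of_nonneg_right this hrp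
  have : Ioc (0:ℝ) 1 ∪ Ioi 1 = Ioi 0 := Ioc_union_Ioi_eq_Ioi zero_le_one
  rw [← this]
  exact hIoc.union hIoi

lemma kernel_scaled (p : ℝ) (hp1 : 1 ≤ p) (hp2 : p < 2) (u : ℝ) :
    IntegrableOn (fun s : ℝ => (1 - Real.cos (u * s)) * s ^ (-1 - p)) (Ioi 0) ∧
    ∫ s in Ioi (0:ℝ), (1 - Real.cos (u * s)) * s ^ (-1 - p)
      = |u| ^ p * ∫ s in Ioi (0:ℝ), (1 - Real.cos s) * s ^ (-1 - p) := by
  rcases eq_or_ne u 0 with rfl | hu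
  · constructor
    · simp
    · rw [abs_zero, Real.zero_rpow (by linarith : p ≠ 0)]
      simp
  · set b := |u| with hb
    have hb0 : 0 < b := abs_pos.mpr hu
    set f : ℝ → ℝ := fun x => (1 - Real.cos x) * x ^ (-1 - p) with hf
    have hfint : IntegrableOn f (Ioi 0) := integrable_kernel p hp1 hp2
    have hcomp : IntegrableOn (fun s : ℝ => f (b * s)) (Ioi 0) := by
      have := (integrableOn_Ioi_comp_mul_left_iff f 0 hb0).mpr (by simpa using hfint)
      simpa using this
    have heq : EqOn (fun s : ℝ => (1 - Real.cos (u * s)) * s ^ (-1 - p))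
        (fun s : ℝ => b ^ (1 + p) * f (b * s)) (Ioi 0) := by
      intro s hs
      have hs0 : (0:ℝ) < s := hs
      have hcos : Real.cos (u * s) = Real.cos (b * s) := by
        rw [hb, ← Real.cos_abs (u * s), abs_mul, abs_of_pos hs0]
      have hmul : (b * s) ^ (-1 - p) = b ^ (-1 - p) * s ^ (-1 - p) :=
        Real.mul_rpow hb0.le hs0.le
      simp only [hf]
      rw [hcos, hmul]
      rw [show b ^ (1 + p) * ((1 - Real.cos (b * s)) * (b ^ (-1 - p) * s ^ (-1 - p)))
          = (b ^ (1 + p) * b ^ (-1 - p)) * ((1 - Real.cos (b * s)) * s ^ (-1 - p)) by ring,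
        ← Real.rpow_add hb0, show (1 + p) + (-1 - p) = 0 by ring, Real.rpow_zero, one_mul]
    constructor
    · exact IntegrableOn.congr_fun (hcomp.const_mul _) (fun s hs => (heq hs).symm) measurableSet_Ioi
    · rw [setIntegral_congr_fun measurableSet_Ioi heq, integral_const_mul,
        integral_comp_mul_left_Ioi f 0 hb0, mul_zero, smul_eq_mul]
      rw [← mul_assoc, ← Real.rpow_neg_one b, ← Real.rpow_add hb0,
        show (1 + p) + (-1) = p by ring]

lemma kernel_integral_pos (p : ℝ) (hp1 : 1 ≤ p) (hp2 : p < 2) :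
    0 < ∫ s in Ioi (0:ℝ), (1 - Real.cos s) * s ^ (-1 - p) := by
  have hfint : IntegrableOn (fun s : ℝ => (1 - Real.cos s) * s ^ (-1 - p)) (Ioi 0) :=
    integrable_kernel p hp1 hp2
  have hnonneg : 0 ≤ᵐ[volume.restrict (Ioi (0:ℝ))]
      fun s : ℝ => (1 - Real.cos s) * s ^ (-1 - p) := by
    filter_upwards [ae_restrict_mem measurableSet_Ioi] with s hs
    exact mul_nonneg (by linarith [Real.cos_le_one s]) (Real.rpow_nonneg (le_of_lt hs) _)
  have hsub : Ioc (π/2) π ⊆ Ioi (0:ℝ) := fun x hx => lt_trans (by positivity) hx.1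
  have hlow : ∀ x ∈ Ioc (π/2) π, Real.pi ^ (-1 - p) ≤ (1 - Real.cos x) * x ^ (-1 - p) := by
    intro x hx
    have hx0 : (0:ℝ) < x := hsub hx
    have hcos : Real.cos x ≤ 0 :=
      Real.cos_nonpos_of_pi_div_two_le_of_le hx.1.le (by linarith [hx.2, Real.pi_pos])
    have h1 : Real.pi ^ (-1 - p) ≤ x ^ (-1 - p) :=
      Real.rpow_le_rpow_of_nonpos hx0 hx.2 (by linarith)
    calc Real.pi ^ (-1 - p) ≤ x ^ (-1 - p) := h1
      _ ≤ (1 - Real.cos x) * x ^ (-1 - p) := by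
          nlinarith [Real.rpow_nonneg hx0.le (-1 - p)]
  have hstep : Real.pi ^ (-1 - p) * (volume (Ioc (π/2) π)).toReal
      ≤ ∫ s in Ioc (π/2) π, (1 - Real.cos s) * s ^ (-1 - p) :=
    setIntegral_ge_of_const_le_real measurableSet_Ioc (by simp) hlow (hfint.mono_set hsub)
  have hmono : ∫ s in Ioc (π/2) π, (1 - Real.cos s) * s ^ (-1 - p)
      ≤ ∫ s in Ioi (0:ℝ), (1 - Real.cos s) * s ^ (-1 - p) :=
    setIntegral_mono_set hfint hnonneg (HasSubset.Subset.eventuallyLE hsub)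
  have hvol : (volume (Ioc (π/2) π)).toReal = π / 2 := by
    rw [Real.volume_Ioc, ENNReal.toReal_ofReal (by linarith [Real.pi_pos])]
    ring
  have hpos : 0 < Real.pi ^ (-1 - p) * (volume (Ioc (π/2) π)).toReal := by
    rw [hvol]
    have := Real.pi_pos
    positivity
  linarith

lemma dsum_sub {n : ℕ} (f g : Fin n → Fin n → ℝ) :
    ∑ i, ∑ j, (f i j - g i j) = (∑ i, ∑ j, f i j) - ∑ i, ∑ j, g i j := by
  rw [← Finset.sum_sub_distrib]
  exact Finset.sum_congr rfl fun i _ => Finset.sum_sub_distrib _ _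

lemma sum_one_sub_cos_nonpos {n : ℕ} (c d : Fin n → ℝ) (hc : ∑ i, c i = 0) :
    ∑ i, ∑ j, c i * c j * (1 - Real.cos (d i - d j)) ≤ 0 := by
  have expand : ∀ i j : Fin n, c i * c j * (1 - Real.cos (d i - d j))
      = c i * c j - ((c i * Real.cos (d i)) * (c j * Real.cos (d j))
          + (c i * Real.sin (d i)) * (c j * Real.sin (d j))) := by
    intro i j
    rw [Real.cos_sub]
    ring
  simp_rw [expand]
  rw [dsum_sub]
  have h1 : ∑ i : Fin n, ∑ j : Fin n, c i * c j = 0 := by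
    rw [← Finset.sum_mul_sum, hc, zero_mul]
  have h2 : ∑ i : Fin n, ∑ j : Fin n, ((c i * Real.cos (d i)) * (c j * Real.cos (d j))
      + (c i * Real.sin (d i)) * (c j * Real.sin (d j)))
      = (∑ i, c i * Real.cos (d i)) * (∑ j, c j * Real.cos (d j))
        + (∑ i, c i * Real.sin (d i)) * (∑ j, c j * Real.sin (d j)) := by
    rw [Finset.sum_mul_sum, Finset.sum_mul_sum, ← Finset.sum_add_distrib]
    exact Finset.sum_congr rfl fun i _ => Finset.sum_add_distrib
  rw [h1, h2]
  nlinarith [mul_self_nonneg (∑ i, c i * Real.cos (d i)),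
    mul_self_nonneg (∑ i, c i * Real.sin (d i))]

/-- Negative definiteness of `|a i - a j| ^ p` for `1 ≤ p ≤ 2`. -/
lemma negdef_abs_rpow (p : ℝ) (hp1 : 1 ≤ p) (hp2 : p ≤ 2) {n : ℕ}
    (a : Fin n → ℝ) (c : Fin n → ℝ) (hc : ∑ i, c i = 0) :
    ∑ i, ∑ j, c i * c j * |a i - a j| ^ p ≤ 0 := by
  rcases eq_or_lt_of_le hp2 with hp2e | hp2l
  · -- p = 2
    subst hp2e
    have habs : ∀ i j : Fin n, |a i - a j| ^ (2:ℝ) = (a i - a j) ^ 2 := by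
      intro i j
      rw [Real.rpow_two, sq_abs]
    simp_rw [habs]
    have expand : ∀ i j : Fin n, c i * c j * (a i - a j) ^ 2
        = (c i * (c j * a j ^ 2) + (c i * a i ^ 2) * c j)
            - 2 * ((c i * a i) * (c j * a j)) := by
      intro i j; ring
    simp_rw [expand]
    rw [dsum_sub]
    have h1 : ∑ i : Fin n, ∑ j : Fin n,
        (c i * (c j * a j ^ 2) + (c i * a i ^ 2) * c j)
        = (∑ i, c i) * (∑ j, c j * a j ^ 2) + (∑ i, c i * a i ^ 2) * (∑ j, c j) := by
      rw [Finset.sum_mul_sum, Finset.sum_mul_sum, ← Finset.sum_add_distrib]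
      exact Finset.sum_congr rfl fun i _ => Finset.sum_add_distrib
    have h2 : ∑ i : Fin n, ∑ j : Fin n, 2 * ((c i * a i) * (c j * a j))
        = 2 * ((∑ i, c i * a i) * (∑ j, c j * a j)) := by
      rw [Finset.sum_mul_sum, Finset.mul_sum]
      refine Finset.sum_congr rfl fun i _ => ?_
      rw [Finset.mul_sum]
    rw [h1, h2, hc]
    nlinarith [mul_self_nonneg (∑ i, c i * a i)]
  · -- 1 ≤ p < 2 : integral representation
    set I := ∫ s in Ioi (0:ℝ), (1 - Real.cos s) * s ^ (-1 - p) with hI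
    have hIpos : 0 < I := kernel_integral_pos p hp1 hp2l
    have hint : ∀ i j : Fin n, IntegrableOn
        (fun s : ℝ => c i * c j * ((1 - Real.cos ((a i - a j) * s)) * s ^ (-1 - p))) (Ioi 0) :=
      fun i j => ((kernel_scaled p hp1 hp2l (a i - a j)).1.const_mul _)
    have key : (∑ i, ∑ j, c i * c j * |a i - a j| ^ p) * I
        = ∫ s in Ioi (0:ℝ), ∑ i, ∑ j,
            c i * c j * ((1 - Real.cos ((a i - a j) * s)) * s ^ (-1 - p)) := by
      rw [integral_finset_sum _ (fun i _ => integrable_finset_sum _ (fun j _ => hint i j))]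
      rw [Finset.sum_mul]
      refine Finset.sum_congr rfl fun i _ => ?_
      rw [integral_finset_sum _ (fun j _ => hint i j), Finset.sum_mul]
      refine Finset.sum_congr rfl fun j _ => ?_
      rw [integral_const_mul, (kernel_scaled p hp1 hp2l (a i - a j)).2, ← hI]
      ring
    have hneg : ∫ s in Ioi (0:ℝ), ∑ i, ∑ j,
        c i * c j * ((1 - Real.cos ((a i - a j) * s)) * s ^ (-1 - p)) ≤ 0 := by
      apply integral_nonpos_of_ae
      filter_upwards [ae_restrict_mem measurableSet_Ioi] with s hs
      have hs0 : (0:ℝ) < s := hs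
      have hfact : ∀ i j : Fin n,
          c i * c j * ((1 - Real.cos ((a i - a j) * s)) * s ^ (-1 - p))
          = (c i * c j * (1 - Real.cos (a i * s - a j * s))) * s ^ (-1 - p) := by
        intro i j
        rw [show (a i - a j) * s = a i * s - a j * s by ring]
        ring
      simp_rw [hfact, ← Finset.sum_mul]
      exact mul_nonpos_of_nonpos_of_nonneg
        (sum_one_sub_cos_nonpos c (fun i => a i * s) hc) (Real.rpow_nonneg hs0.le _)
    nlinarith

/-- A real symmetric kernel with nonnegative quadratic form is a Gram kernel. -/
lemma gram_of_psd {n : ℕ} (B : Fin n → Fin n → ℝ)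
    (hsymm : ∀ i j, B i j = B j i)
    (hB : ∀ c : Fin n → ℝ, 0 ≤ ∑ i, ∑ j, c i * c j * B i j) :
    ∃ L : Fin n → Fin n → ℝ, ∀ i j, B i j = ∑ k, L k i * L k j := by
  set M : Matrix (Fin n) (Fin n) ℝ := Matrix.of B with hM
  have hpsd : M.PosSemidef := by
    refine Matrix.PosSemidef.of_dotProduct_mulVec_nonneg ?_ ?_
    · ext i j
      simp [Matrix.conjTranspose, M, hsymm i j]
    · intro c
      have : (dotProduct c (M.mulVec c)) = ∑ i, ∑ j, c i * c j * B i j := by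
        simp [dotProduct, Matrix.mulVec, Finset.mul_sum, M]
        exact Finset.sum_congr rfl fun i _ => Finset.sum_congr rfl fun j _ => by ring
      simpa [this] using hB c
  obtain ⟨L, hL⟩ : ∃ L : Matrix (Fin n) (Fin n) ℝ, M = Matrix.conjTranspose L * L := by
    open scoped MatrixOrder in exact CStarAlgebra.nonneg_iff_eq_star_mul_self.mp hpsd.nonneg
  refine ⟨fun k i => L k i, fun i j => ?_⟩
  have := congrArg (fun A => A i j) hL
  simpa [Matrix.mul_apply, Matrix.conjTranspose_apply, M] using this

/-- Schur product: the entrywise product of PSD kernels is PSD (quadratic-form version). -/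
lemma schur_psd {n : ℕ} (A B : Fin n → Fin n → ℝ)
    (hA : ∀ c : Fin n → ℝ, 0 ≤ ∑ i, ∑ j, c i * c j * A i j)
    (hsymm : ∀ i j, B i j = B j i)
    (hB : ∀ c : Fin n → ℝ, 0 ≤ ∑ i, ∑ j, c i * c j * B i j) :
    ∀ c : Fin n → ℝ, 0 ≤ ∑ i, ∑ j, c i * c j * (A i j * B i j) := by
  obtain ⟨L, hL⟩ := gram_of_psd B hsymm hB
  intro c
  have key : ∑ i, ∑ j, c i * c j * (A i j * B i j)
      = ∑ k, ∑ i, ∑ j, (c i * L k i) * (c j * L k j) * A i j :=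
    calc ∑ i, ∑ j, c i * c j * (A i j * B i j)
        = ∑ i, ∑ j, ∑ k, (c i * L k i) * (c j * L k j) * A i j := by
          refine Finset.sum_congr rfl fun i _ => Finset.sum_congr rfl fun j _ => ?_
          rw [hL, Finset.mul_sum, Finset.mul_sum]
          exact Finset.sum_congr rfl fun k _ => by ring
      _ = ∑ i, ∑ k, ∑ j, (c i * L k i) * (c j * L k j) * A i j :=
          Finset.sum_congr rfl fun i _ => Finset.sum_comm
      _ = ∑ k, ∑ i, ∑ j, (c i * L k i) * (c j * L k j) * A i j := Finset.sum_comm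
  rw [key]
  exact Finset.sum_nonneg fun k _ => hA fun i => c i * L k i

/-- The quadratic form of the all-ones kernel and entrywise powers of a PSD kernel. -/
lemma pow_psd {n : ℕ} (B : Fin n → Fin n → ℝ)
    (hsymm : ∀ i j, B i j = B j i)
    (hB : ∀ c : Fin n → ℝ, 0 ≤ ∑ i, ∑ j, c i * c j * B i j) :
    ∀ k : ℕ, ∀ c : Fin n → ℝ, 0 ≤ ∑ i, ∑ j, c i * c j * (B i j ^ k) := by
  intro k
  induction k with
  | zero =>
      intro c
      have : ∑ i, ∑ j, c i * c j * (B i j ^ 0) = (∑ i, c i) * (∑ j, c j) := by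
        rw [Finset.sum_mul_sum]; simp
      rw [this]; exact mul_self_nonneg _
  | succ k ih =>
      intro c
      have : ∀ i j : Fin n, B i j ^ (k + 1) = B i j ^ k * B i j := fun i j => pow_succ _ _
      simpa only [this] using schur_psd (fun i j => B i j ^ k) B ih hsymm hB c

/-- Entrywise exponential of a symmetric PSD kernel is PSD. -/
lemma exp_psd {n : ℕ} (B : Fin n → Fin n → ℝ)
    (hsymm : ∀ i j, B i j = B j i)
    (hB : ∀ c : Fin n → ℝ, 0 ≤ ∑ i, ∑ j, c i * c j * B i j) :
    ∀ c : Fin n → ℝ, 0 ≤ ∑ i, ∑ j, c i * c j * Real.exp (B i j) := by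
  intro c
  have hexp : ∀ u : ℝ, Real.exp u = ∑' k : ℕ, u ^ k / k.factorial := by
    intro u
    rw [Real.exp_eq_exp_ℝ, NormedSpace.exp_eq_tsum_div]
  have hsummable : ∀ i j : Fin n, Summable (fun k : ℕ => c i * c j * (B i j ^ k / k.factorial)) :=
    fun i j => (Real.summable_pow_div_factorial (B i j)).mul_left _
  calc (0:ℝ) ≤ ∑' k : ℕ, ∑ i, ∑ j, c i * c j * (B i j ^ k / k.factorial) := by
        refine tsum_nonneg fun k => ?_
        have : ∀ i j : Fin n, c i * c j * (B i j ^ k / k.factorial)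
            = (c i * c j * B i j ^ k) * (1 / k.factorial) := fun i j => by ring
        simp only [this, ← Finset.sum_mul]
        exact mul_nonneg (pow_psd B hsymm hB k c) (by positivity)
    _ = ∑ i, ∑ j, ∑' k : ℕ, c i * c j * (B i j ^ k / k.factorial) := by
        rw [Summable.tsum_finsetSum (fun i _ => summable_sum fun j _ => hsummable i j)]
        exact Finset.sum_congr rfl fun i _ =>
          Summable.tsum_finsetSum fun j _ => hsummable i j
    _ = ∑ i, ∑ j, c i * c j * Real.exp (B i j) := by
        refine Finset.sum_congr rfl fun i _ => Finset.sum_congr rfl fun j _ => ?_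
        rw [tsum_mul_left, hexp]

lemma dsum_add {n : ℕ} (f g : Fin n → Fin n → ℝ) :
    ∑ i, ∑ j, (f i j + g i j) = (∑ i, ∑ j, f i j) + ∑ i, ∑ j, g i j := by
  rw [← Finset.sum_add_distrib]
  exact Finset.sum_congr rfl fun i _ => Finset.sum_add_distrib

/-- Schoenberg's theorem (finite form): the exponential of minus a
negative-definite kernel vanishing on the diagonal is positive definite. -/
lemma schoenberg_exp {n : ℕ} (hn : 0 < n) (N : Fin n → Fin n → ℝ)
    (hsymm : ∀ i j, N i j = N j i)
    (hneg : ∀ d : Fin n → ℝ, ∑ i, d i = 0 → ∑ i, ∑ j, d i * d j * N i j ≤ 0)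
    (hdiag : ∀ i, N i i = 0) :
    ∀ c : Fin n → ℝ, 0 ≤ ∑ i, ∑ j, c i * c j * Real.exp (-N i j) := by
  intro c
  set i0 : Fin n := ⟨0, hn⟩
  set B : Fin n → Fin n → ℝ := fun i j => N i i0 + N j i0 - N i j with hB
  have hBsymm : ∀ i j, B i j = B j i := by
    intro i j; simp only [hB]; rw [hsymm i j]; ring
  have hQB : ∀ d : Fin n → ℝ, 0 ≤ ∑ i, ∑ j, d i * d j * B i j := by
    intro d
    set s : ℝ := ∑ i, d i with hs
    set e : Fin n → ℝ := fun i => d i - s * (if i = i0 then 1 else 0) with he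
    have hesum : ∑ i, e i = 0 := by
      simp only [he]
      rw [Finset.sum_sub_distrib, ← Finset.mul_sum]
      simp [← hs]
    have hY : ∑ i : Fin n, ∑ j : Fin n, (if i = i0 then s * (d j * N i j) else 0)
        = s * (∑ j, d j * N i0 j) := by
      have h1 : ∀ i : Fin n, ∑ j : Fin n, (if i = i0 then s * (d j * N i j) else 0)
          = if i = i0 then ∑ j, s * (d j * N i j) else 0 := fun i => by
        split <;> simp
      simp_rw [h1]
      rw [Finset.sum_ite_eq' Finset.univ i0]
      simp [Finset.mul_sum]
    have hZ : ∑ i : Fin n, ∑ j : Fin n, (if j = i0 then s * (d i * N i j) else 0)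
        = s * (∑ i, d i * N i i0) := by
      have h1 : ∀ i : Fin n, ∑ j : Fin n, (if j = i0 then s * (d i * N i j) else 0)
          = s * (d i * N i i0) := fun i => by
        rw [Finset.sum_ite_eq' Finset.univ i0]; simp
      simp_rw [h1]
      rw [← Finset.mul_sum]
    have hW : ∑ i : Fin n, ∑ j : Fin n,
        (if i = i0 then (if j = i0 then s * s * N i j else 0) else 0)
        = s * s * N i0 i0 := by
      have h1 : ∀ i : Fin n, ∑ j : Fin n,
          (if i = i0 then (if j = i0 then s * s * N i j else 0) else 0)
          = if i = i0 then s * s * N i i0 else 0 := fun i => by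
        split <;> simp [Finset.sum_ite_eq' Finset.univ i0]
      simp_rw [h1]
      rw [Finset.sum_ite_eq' Finset.univ i0]
      simp
    have hkey : ∑ i, ∑ j, e i * e j * N i j
        = ∑ i, ∑ j, d i * d j * N i j - s * (∑ j, d j * N i0 j)
          - s * (∑ i, d i * N i i0) + s * s * N i0 i0 := by
      have expand : ∀ i j : Fin n, e i * e j * N i j
          = d i * d j * N i j - (if i = i0 then s * (d j * N i j) else 0)
            - (if j = i0 then s * (d i * N i j) else 0)
            + (if i = i0 then (if j = i0 then s * s * N i j else 0) else 0) := by
        intro i j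
        by_cases hi : i = i0 <;> by_cases hj : j = i0 <;> simp [he, hi, hj] <;> ring
      simp_rw [expand]
      rw [dsum_add (fun i j => d i * d j * N i j - (if i = i0 then s * (d j * N i j) else 0)
            - (if j = i0 then s * (d i * N i j) else 0))
          (fun i j => (if i = i0 then (if j = i0 then s * s * N i j else 0) else 0)),
        dsum_sub (fun i j => d i * d j * N i j - (if i = i0 then s * (d j * N i j) else 0))
          (fun i j => (if j = i0 then s * (d i * N i j) else 0)),
        dsum_sub (fun i j => d i * d j * N i j)
          (fun i j => (if i = i0 then s * (d j * N i j) else 0)),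
        hY, hZ, hW]
    have hBexp : ∑ i, ∑ j, d i * d j * B i j
        = s * (∑ i, d i * N i i0) + s * (∑ j, d j * N j i0)
          - ∑ i, ∑ j, d i * d j * N i j := by
      have expand : ∀ i j : Fin n, d i * d j * B i j
          = ((d i * N i i0) * d j + d i * (d j * N j i0)) - d i * d j * N i j := by
        intro i j; simp only [hB]; ring
      simp_rw [expand]
      rw [dsum_sub (fun i j => (d i * N i i0) * d j + d i * (d j * N j i0))
          (fun i j => d i * d j * N i j),
        dsum_add (fun i j => (d i * N i i0) * d j) (fun i j => d i * (d j * N j i0))]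
      have e1 : ∑ i : Fin n, ∑ j : Fin n, (d i * N i i0) * d j
          = s * (∑ i, d i * N i i0) := by
        rw [← Finset.sum_mul_sum, ← hs, mul_comm]
      have e2 : ∑ i : Fin n, ∑ j : Fin n, d i * (d j * N j i0)
          = s * (∑ j, d j * N j i0) := by
        rw [← Finset.sum_mul_sum, ← hs]
      rw [e1, e2]
    have hrw : ∑ j, d j * N i0 j = ∑ j, d j * N j i0 :=
      Finset.sum_congr rfl fun j _ => by rw [hsymm i0 j]
    have hd0 := hneg e hesum
    rw [hkey, hrw, hdiag i0] at hd0
    linarith [hd0, hBexp]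
  have hexp : ∀ i j : Fin n, Real.exp (-N i j)
      = Real.exp (-N i i0) * (Real.exp (-N j i0) * Real.exp (B i j)) := by
    intro i j
    rw [← Real.exp_add, ← Real.exp_add]
    congr 1
    simp only [hB]
    ring
  have hfinal : ∑ i, ∑ j, c i * c j * Real.exp (-N i j)
      = ∑ i, ∑ j, (c i * Real.exp (-N i i0)) * (c j * Real.exp (-N j i0))
          * Real.exp (B i j) := by
    refine Finset.sum_congr rfl fun i _ => Finset.sum_congr rfl fun j _ => ?_
    rw [hexp i j]
    ring
  rw [hfinal]
  exact exp_psd B hBsymm hQB (fun i => c i * Real.exp (-N i i0))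

/-- For `1 ≤ p ≤ 2`, `t > 0` and nonnegative weights, the kernel
`(x, z) ↦ exp(-t ∑_e w_e |x_e - z_e|^p)` on `ℝ^m` is positive definite. -/
theorem exp_neg_weighted_lp_pow_positive_definite
    (p : ℝ) (hp1 : 1 ≤ p) (hp2 : p ≤ 2)
    (t : ℝ) (ht : 0 < t)
    (m : ℕ) (hm : 0 < m) (w : Fin m → ℝ) (hw : ∀ e, 0 ≤ w e) :
    ∀ (n : ℕ), 1 ≤ n → ∀ (x : Fin n → Fin m → ℝ) (c : Fin n → ℝ),
      0 ≤ ∑ i, ∑ j, c i * c j *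
        Real.exp (-(t * ∑ e, w e * |x i e - x j e| ^ p)) := by
  intro n hn x c
  set N : Fin n → Fin n → ℝ := fun i j => t * ∑ e, w e * |x i e - x j e| ^ p with hN
  have hsymm : ∀ i j, N i j = N j i := by
    intro i j
    simp only [hN]
    congr 1
    exact Finset.sum_congr rfl fun e _ => by rw [abs_sub_comm]
  have hdiag : ∀ i, N i i = 0 := by
    intro i
    simp only [hN]
    have : ∀ e : Fin m, w e * |x i e - x i e| ^ p = 0 := by
      intro e
      rw [sub_self, abs_zero, Real.zero_rpow (by linarith : p ≠ 0), mul_zero]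
    rw [Finset.sum_congr rfl fun e _ => this e]
    simp
  have hneg : ∀ d : Fin n → ℝ, ∑ i, d i = 0 → ∑ i, ∑ j, d i * d j * N i j ≤ 0 := by
    intro d hd
    have hswap : ∑ i, ∑ j, d i * d j * N i j
        = t * ∑ e, w e * ∑ i, ∑ j, d i * d j * |x i e - x j e| ^ p := by
      calc ∑ i, ∑ j, d i * d j * N i j
          = ∑ i, ∑ j, ∑ e, t * (w e * (d i * d j * |x i e - x j e| ^ p)) := by
            refine Finset.sum_congr rfl fun i _ => Finset.sum_congr rfl fun j _ => ?_
            simp only [hN]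
            rw [Finset.mul_sum, Finset.mul_sum]
            exact Finset.sum_congr rfl fun e _ => by ring
        _ = ∑ i, ∑ e, ∑ j, t * (w e * (d i * d j * |x i e - x j e| ^ p)) :=
            Finset.sum_congr rfl fun i _ => Finset.sum_comm
        _ = ∑ e, ∑ i, ∑ j, t * (w e * (d i * d j * |x i e - x j e| ^ p)) :=
            Finset.sum_comm
        _ = t * ∑ e, w e * ∑ i, ∑ j, d i * d j * |x i e - x j e| ^ p := by
            rw [Finset.mul_sum]
            refine Finset.sum_congr rfl fun e _ => ?_
            calc ∑ i, ∑ j, t * (w e * (d i * d j * |x i e - x j e| ^ p))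
                = ∑ i, t * (w e * ∑ j, d i * d j * |x i e - x j e| ^ p) := by
                  refine Finset.sum_congr rfl fun i _ => ?_
                  rw [Finset.mul_sum, Finset.mul_sum]
              _ = t * (w e * ∑ i, ∑ j, d i * d j * |x i e - x j e| ^ p) := by
                  rw [Finset.mul_sum, Finset.mul_sum]
    rw [hswap]
    have hsum : ∑ e, w e * ∑ i, ∑ j, d i * d j * |x i e - x j e| ^ p ≤ 0 := by
      refine Finset.sum_nonpos fun e _ => ?_
      exact mul_nonpos_of_nonneg_of_nonpos (hw e)
        (negdef_abs_rpow p hp1 hp2 (fun i => x i e) d hd)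
    exact mul_nonpos_of_nonneg_of_nonpos ht.le hsum
  have := schoenberg_exp (by omega : 0 < n) N hsymm hneg hdiag c
  simpa only [hN] using this
end

section
/- Let 1 ≤ p ≤ 2, let t > 0, let m be a positive integer, and let w_1, …, w_m ≥ 0 be nonnegative reals. Then the kernel K(x, z) := exp( −t ( ∑_{e=1}^m w_e |x_e − z_e|^p )^{1/p} ) on ℝ^m is positive definite: for every integer n ≥ 1, all x^{(1)}, …, x^{(n)} ∈ ℝ^m and all c_1, …, c_n ∈ ℝ, one has ∑_{i=1}^n ∑_{j=1}^n c_i c_j exp( −t ( ∑_{e=1}^m w_e |x^{(i)}_e − x^{(j)}_e|^p )^{1/p} ) ≥ 0. -/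
open MeasureTheory Set Matrix Nat

/-- quadratic form nonnegativity for an `n × n` array of reals -/
def QF {n : ℕ} (M : Fin n → Fin n → ℝ) : Prop :=
  ∀ c : Fin n → ℝ, 0 ≤ ∑ i, ∑ j, c i * c j * M i j

lemma qf_of_posSemidef {n : ℕ} {B : Matrix (Fin n) (Fin n) ℝ} (hB : B.PosSemidef)
    {A : Fin n → Fin n → ℝ} (hA : QF A) : QF (fun i j => A i j * B i j) := by
  obtain ⟨Q, rfl⟩ : ∃ Q : Matrix (Fin n) (Fin n) ℝ, B = Qᴴ * Q := by
    open scoped MatrixOrder Matrix.Norms.L2Operator in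
    exact CStarAlgebra.nonneg_iff_eq_star_mul_self.mp hB.nonneg
  intro c
  have hent : ∀ i j, (Qᴴ * Q) i j = ∑ l, Q l i * Q l j := by
    intro i j
    simp [Matrix.mul_apply, Matrix.conjTranspose_apply]
  calc (0:ℝ) ≤ ∑ l, ∑ i, ∑ j, (c i * Q l i) * (c j * Q l j) * A i j := by
        exact Finset.sum_nonneg fun l _ => hA (fun i => c i * Q l i)
    _ = ∑ i, ∑ j, c i * c j * (A i j * (Qᴴ * Q) i j) := by
        rw [Finset.sum_comm]
        refine Finset.sum_congr rfl fun i _ => ?_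
        rw [Finset.sum_comm]
        refine Finset.sum_congr rfl fun j _ => ?_
        rw [hent, Finset.mul_sum, Finset.mul_sum]
        exact Finset.sum_congr rfl fun l _ => by ring

lemma qf_pow {n : ℕ} {M : Fin n → Fin n → ℝ} (hsym : ∀ i j, M i j = M j i) (hM : QF M) :
    ∀ k : ℕ, QF (fun i j => M i j ^ k) := by
  have hpsd : (Matrix.of M).PosSemidef := by
    refine Matrix.PosSemidef.of_dotProduct_mulVec_nonneg ?_ ?_
    · ext i j
      simp [Matrix.conjTranspose_apply, hsym j i]
    · intro x
      have := hM x
      simpa [dotProduct, Matrix.mulVec, Finset.mul_sum, mul_assoc, mul_comm, mul_left_comm] using this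
  intro k
  induction k with
  | zero =>
      intro c
      simpa [← Finset.sum_mul_sum] using mul_self_nonneg (∑ i, c i)
  | succ k ih =>
      have := qf_of_posSemidef hpsd ih
      intro c
      simpa [pow_succ, mul_comm, mul_assoc, mul_left_comm] using this c

lemma qf_exp {n : ℕ} {M : Fin n → Fin n → ℝ} (hsym : ∀ i j, M i j = M j i) (hM : QF M) :
    QF (fun i j => Real.exp (M i j)) := by
  intro c
  have hexp : ∀ i j : Fin n, c i * c j * Real.exp (M i j)
      = ∑' k : ℕ, c i * c j * (M i j ^ k / k !) := by
    intro i j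
    rw [Real.exp_eq_exp_ℝ, NormedSpace.exp_eq_tsum_div, tsum_mul_left]
  calc (0:ℝ) ≤ ∑' k : ℕ, ∑ i, ∑ j, c i * c j * (M i j ^ k / k !) := by
        refine tsum_nonneg fun k => ?_
        have h1 : ∀ i j, c i * c j * (M i j ^ k / k !) = c i * c j * M i j ^ k / k ! := by
          intro i j; ring
        simp only [h1, ← Finset.sum_div]
        exact div_nonneg (qf_pow hsym hM k c) (by positivity)
    _ = ∑ i, ∑ j, c i * c j * Real.exp (M i j) := by
        have hs : ∀ (i j : Fin n), Summable (fun k : ℕ => c i * c j * (M i j ^ k / k !)) :=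
          fun i j => (Real.summable_pow_div_factorial (M i j)).mul_left _
        rw [Summable.tsum_finsetSum (fun i _ => summable_sum (fun j _ => hs i j))]
        refine Finset.sum_congr rfl fun i _ => ?_
        rw [Summable.tsum_finsetSum (fun j _ => hs i j)]
        exact Finset.sum_congr rfl fun j _ => (hexp i j).symm

def KND {α : Type*} (N : α → α → ℝ) : Prop :=
  ∀ (n : ℕ) (x : Fin n → α) (c : Fin n → ℝ), (∑ i, c i) = 0 →
    ∑ i, ∑ j, c i * c j * N (x i) (x j) ≤ 0

lemma kpd_exp_of_knd {α : Type*} {N : α → α → ℝ}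
    (hsymm : ∀ x y, N x y = N y x) (hdiag : ∀ x, N x x = 0) (hND : KND N)
    {t : ℝ} (ht : 0 ≤ t) (n : ℕ) (x : Fin n → α) (c : Fin n → ℝ) :
    0 ≤ ∑ i, ∑ j, c i * c j * Real.exp (-(t * N (x i) (x j))) := by
  obtain _ | n := n
  · simp
  set x0 := x 0 with hx0
  set M : Fin (n+1) → Fin (n+1) → ℝ :=
    fun i j => t * (N (x i) x0 + N (x j) x0 - N (x i) (x j)) with hM
  have hsymM : ∀ i j, M i j = M j i := by
    intro i j; simp only [hM]; rw [hsymm (x i) (x j)]; ring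
  have hQF : QF M := by
    intro d
    set S := ∑ i, d i with hS
    set B := ∑ i, d i * N (x i) x0 with hB
    set A := ∑ i, ∑ j, d i * d j * N (x i) (x j) with hA
    -- negative definiteness applied to the extended family
    have key := hND (n+2) (Fin.snoc x x0) (Fin.snoc d (-S)) (by
      rw [Fin.sum_univ_castSucc]; simp [hS])
    rw [Fin.sum_univ_castSucc] at key
    have inner1 : ∀ i : Fin (n+1),
        ∑ j : Fin (n+2), (Fin.snoc d (-S) : Fin (n+2) → ℝ) i.castSucc *
            (Fin.snoc d (-S) : Fin (n+2) → ℝ) j *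
          N ((Fin.snoc x x0 : Fin (n+2) → α) i.castSucc) ((Fin.snoc x x0 : Fin (n+2) → α) j)
        = (∑ j : Fin (n+1), d i * d j * N (x i) (x j)) + d i * (-S) * N (x i) x0 := by
      intro i
      rw [Fin.sum_univ_castSucc]
      simp
    have inner2 :
        ∑ j : Fin (n+2), (Fin.snoc d (-S) : Fin (n+2) → ℝ) (Fin.last (n+1)) *
            (Fin.snoc d (-S) : Fin (n+2) → ℝ) j *
          N ((Fin.snoc x x0 : Fin (n+2) → α) (Fin.last (n+1))) ((Fin.snoc x x0 : Fin (n+2) → α) j)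
        = (∑ j : Fin (n+1), (-S) * d j * N (x j) x0) + 0 := by
      rw [Fin.sum_univ_castSucc]
      simp only [Fin.snoc_castSucc, Fin.snoc_last, hdiag, mul_zero, add_zero, add_right_inj]
      exact Finset.sum_congr rfl fun j _ => by rw [hsymm x0 (x j)]
    rw [Finset.sum_congr rfl (fun i _ => inner1 i), inner2, add_zero,
        Finset.sum_add_distrib] at key
    have e1 : ∑ i : Fin (n+1), d i * (-S) * N (x i) x0 = (-S) * B := by
      rw [hB, Finset.mul_sum]
      exact Finset.sum_congr rfl fun i _ => by ring
    have e2 : ∑ j : Fin (n+1), (-S) * d j * N (x j) x0 = (-S) * B := by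
      rw [hB, Finset.mul_sum]
      exact Finset.sum_congr rfl fun i _ => by ring
    rw [e1, e2, ← hA] at key
    -- key : A + -S * B + -S * B ≤ 0
    have expand : ∑ i, ∑ j, d i * d j * M i j
        = t * ((∑ i, d i * N (x i) x0) * (∑ j, d j))
          + t * ((∑ i, d i) * (∑ j, d j * N (x j) x0))
          - t * (∑ i, ∑ j, d i * d j * N (x i) (x j)) := by
      have h : ∀ i j, d i * d j * M i j
          = t * ((d i * N (x i) x0) * d j) + t * (d i * (d j * N (x j) x0))
            - t * (d i * d j * N (x i) (x j)) := by
        intro i j; simp only [hM]; ring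
      rw [Finset.sum_congr rfl (fun i (_ : i ∈ Finset.univ) =>
        Finset.sum_congr rfl fun j (_ : j ∈ Finset.univ) => h i j)]
      rw [Finset.sum_mul_sum, Finset.sum_mul_sum, Finset.mul_sum, Finset.mul_sum,
        Finset.mul_sum]
      simp only [Finset.mul_sum, Finset.sum_add_distrib, Finset.sum_sub_distrib]
    rw [expand, ← hB, ← hS, ← hA]
    have : t * (B * S) + t * (S * B) - t * A = t * (2 * (S * B) - A) := by ring
    rw [this]
    refine mul_nonneg ht (by nlinarith [key])
  -- now use the exp lemma
  have hqe := qf_exp hsymM hQF (fun i => c i * Real.exp (-(t * N (x i) x0)))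
  refine le_trans hqe (le_of_eq ?_)
  refine Finset.sum_congr rfl fun i _ => Finset.sum_congr rfl fun j _ => ?_
  simp only [hM]
  rw [mul_mul_mul_comm, ← Real.exp_add, mul_assoc, ← Real.exp_add]
  have harg : -(t * N (x i) x0) + -(t * N (x j) x0)
      + t * (N (x i) x0 + N (x j) x0 - N (x i) (x j)) = -(t * N (x i) (x j)) := by ring
  rw [harg]

lemma integrableOn_aux {f : ℝ → ℝ} (hf : ContinuousOn f (Ioi (0:ℝ)))
    {C D γ δ : ℝ} (hγ : -1 < γ) (hδ : δ < -1)
    (h1 : ∀ s ∈ Ioc (0:ℝ) 1, |f s| ≤ C * s ^ γ)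
    (h2 : ∀ s ∈ Ioi (1:ℝ), |f s| ≤ D * s ^ δ) :
    IntegrableOn f (Ioi (0:ℝ)) := by
  have hu : Ioc (0:ℝ) 1 ∪ Ioi 1 = Ioi 0 := Ioc_union_Ioi_eq_Ioi zero_le_one
  rw [← hu]
  refine IntegrableOn.union ?_ ?_
  · have hint : IntegrableOn (fun s : ℝ => C * s ^ γ) (Ioc (0:ℝ) 1) := by
      refine Integrable.const_mul ?_ C
      have := intervalIntegral.intervalIntegrable_rpow' (a := 0) (b := 1) hγ
      rwa [intervalIntegrable_iff, uIoc_of_le zero_le_one] at this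
    refine Integrable.mono hint
      ((hf.mono Ioc_subset_Ioi_self).aestronglyMeasurable measurableSet_Ioc) ?_
    refine (ae_restrict_iff' measurableSet_Ioc).2 (Filter.Eventually.of_forall fun s hs => ?_)
    rw [Real.norm_eq_abs, Real.norm_eq_abs]
    exact le_trans (h1 s hs) (le_abs_self _)
  · have hint : IntegrableOn (fun s : ℝ => D * s ^ δ) (Ioi (1:ℝ)) :=
      (integrableOn_Ioi_rpow_of_lt hδ one_pos).const_mul D
    refine Integrable.mono hint
      ((hf.mono (Ioi_subset_Ioi zero_le_one)).aestronglyMeasurable measurableSet_Ioi) ?_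
    refine (ae_restrict_iff' measurableSet_Ioi).2 (Filter.Eventually.of_forall fun s hs => ?_)
    rw [Real.norm_eq_abs, Real.norm_eq_abs]
    exact le_trans (h2 s hs) (le_abs_self _)

lemma continuousOn_rpow_exponent (c : ℝ) :
    ContinuousOn (fun s : ℝ => s ^ c) (Ioi (0:ℝ)) := fun s hs =>
  (Real.continuousAt_rpow_const s c (Or.inl (ne_of_gt hs))).continuousWithinAt

lemma scale_Ioi (g : ℝ → ℝ) {a : ℝ} (ha : 0 < a) :
    ∫ s in Ioi (0:ℝ), g (a * s) = a⁻¹ * ∫ s in Ioi (0:ℝ), g s := by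
  simpa using MeasureTheory.integral_comp_mul_left_Ioi g 0 ha

/-! ### the `1 - exp` representation -/

lemma integrableOn_one_sub_exp {α : ℝ} (h0 : 0 < α) (h1 : α < 1) {a : ℝ} (ha : 0 ≤ a) :
    IntegrableOn (fun s : ℝ => (1 - Real.exp (-(a*s))) * s ^ (-1-α)) (Ioi (0:ℝ)) := by
  refine integrableOn_aux ?_ (γ := -α) (δ := -1-α) (C := a) (D := 1) (by linarith) (by linarith)
    ?_ ?_
  · exact (Continuous.continuousOn (by continuity)).mul (continuousOn_rpow_exponent _)
  · intro s hs
    have hs0 : 0 < s := hs.1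
    have hexp : 0 ≤ 1 - Real.exp (-(a*s)) := by
      have := Real.exp_le_one_iff.2 (by nlinarith : -(a*s) ≤ 0)
      linarith
    have hb : 1 - Real.exp (-(a*s)) ≤ a * s := by
      have := Real.add_one_le_exp (-(a*s))
      linarith
    rw [abs_of_nonneg (mul_nonneg hexp (Real.rpow_nonneg hs0.le _))]
    calc (1 - Real.exp (-(a*s))) * s ^ (-1-α) ≤ (a * s) * s ^ (-1-α) :=
          mul_le_mul_of_nonneg_right hb (Real.rpow_nonneg hs0.le _)
      _ = a * s ^ (-α) := by
          rw [mul_assoc]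
          congr 1
          rw [← Real.rpow_one_add' hs0.le (show (1:ℝ) + (-1-α) ≠ 0 by
            intro h; apply h0.ne'; linarith)]
          congr 1
          ring
  · intro s hs
    have hs0 : 0 < s := lt_trans one_pos hs
    have hexp : 0 ≤ 1 - Real.exp (-(a*s)) := by
      have := Real.exp_le_one_iff.2 (by nlinarith : -(a*s) ≤ 0)
      linarith
    have hb : 1 - Real.exp (-(a*s)) ≤ 1 := by
      have := Real.exp_pos (-(a*s)); linarith
    rw [abs_of_nonneg (mul_nonneg hexp (Real.rpow_nonneg hs0.le _))]
    exact mul_le_mul_of_nonneg_right hb (Real.rpow_nonneg hs0.le _)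

lemma exp_repr {α : ℝ} (h0 : 0 < α) {a : ℝ} (ha : 0 ≤ a) :
    ∫ s in Ioi (0:ℝ), (1 - Real.exp (-(a*s))) * s ^ (-1-α)
      = a ^ α * ∫ s in Ioi (0:ℝ), (1 - Real.exp (-s)) * s ^ (-1-α) := by
  rcases eq_or_lt_of_le ha with rfl | ha'
  · simp [Real.zero_rpow h0.ne']
  · have hone : a ^ (1+α) * a ^ (-1-α) = 1 := by
      rw [← Real.rpow_add ha']; norm_num
    have key : EqOn (fun s : ℝ => (1 - Real.exp (-(a*s))) * s ^ (-1-α))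
        (fun s : ℝ => a ^ (1+α) * ((1 - Real.exp (-(a*s))) * (a*s) ^ (-1-α)))
        (Ioi (0:ℝ)) := by
      intro s hs
      have hs0 : (0:ℝ) < s := hs
      simp only
      rw [Real.mul_rpow ha'.le hs0.le]
      calc (1 - Real.exp (-(a*s))) * s ^ (-1-α)
          = (a ^ (1+α) * a ^ (-1-α)) * ((1 - Real.exp (-(a*s))) * s ^ (-1-α)) := by
            rw [hone, one_mul]
        _ = a ^ (1+α) * ((1 - Real.exp (-(a*s))) * (a ^ (-1-α) * s ^ (-1-α))) := by ring
    rw [setIntegral_congr_fun measurableSet_Ioi key, MeasureTheory.integral_const_mul,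
      scale_Ioi (fun y : ℝ => (1 - Real.exp (-y)) * y ^ (-1-α)) ha', ← mul_assoc]
    congr 1
    rw [← Real.rpow_neg_one a, ← Real.rpow_add ha']
    norm_num

lemma exp_repr_pos {α : ℝ} (h0 : 0 < α) (h1 : α < 1) :
    0 < ∫ s in Ioi (0:ℝ), (1 - Real.exp (-s)) * s ^ (-1-α) := by
  have hint : IntegrableOn (fun s : ℝ => (1 - Real.exp (-(1*s))) * s ^ (-1-α)) (Ioi (0:ℝ)) :=
    integrableOn_one_sub_exp h0 h1 zero_le_one
  simp only [one_mul] at hint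
  rw [setIntegral_pos_iff_support_of_nonneg_ae ?nonneg hint]
  case nonneg =>
    refine (ae_restrict_iff' measurableSet_Ioi).2 (Filter.Eventually.of_forall fun s hs => ?_)
    have hs0 : (0:ℝ) < s := hs
    have : Real.exp (-s) ≤ 1 := Real.exp_le_one_iff.2 (by linarith)
    exact mul_nonneg (by linarith) (Real.rpow_nonneg hs0.le _)
  · have hsub : Ioi (0:ℝ) ⊆ Function.support (fun s : ℝ => (1 - Real.exp (-s)) * s ^ (-1-α)) := by
      intro s hs
      have hs0 : (0:ℝ) < s := hs
      have h1' : Real.exp (-s) < 1 := Real.exp_lt_one_iff.2 (by linarith)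
      exact ne_of_gt (mul_pos (by linarith) (Real.rpow_pos_of_pos hs0 _))
    calc (0:ENNReal) < volume (Ioi (0:ℝ)) := by rw [Real.volume_Ioi]; exact ENNReal.zero_lt_top
      _ ≤ volume (Function.support (fun s : ℝ => (1 - Real.exp (-s)) * s ^ (-1-α)) ∩ Ioi 0) :=
        measure_mono (subset_inter hsub (subset_refl _))

lemma integrableOn_one_sub_cos {p : ℝ} (hp0 : 0 < p) (hp2 : p < 2) (u : ℝ) :
    IntegrableOn (fun r : ℝ => (1 - Real.cos (u*r)) * r ^ (-1-p)) (Ioi (0:ℝ)) := by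
  refine integrableOn_aux ?_ (γ := 1-p) (δ := -1-p) (C := u^2/2) (D := 2)
    (by linarith) (by linarith) ?_ ?_
  · exact (Continuous.continuousOn (by continuity)).mul (continuousOn_rpow_exponent _)
  · intro r hr
    have hr0 : 0 < r := hr.1
    have hcos : 0 ≤ 1 - Real.cos (u*r) := by linarith [Real.cos_le_one (u*r)]
    have hb : 1 - Real.cos (u*r) ≤ (u*r)^2 / 2 := by
      linarith [Real.one_sub_sq_div_two_le_cos (x := u*r)]
    rw [abs_of_nonneg (mul_nonneg hcos (Real.rpow_nonneg hr0.le _))]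
    calc (1 - Real.cos (u*r)) * r ^ (-1-p) ≤ ((u*r)^2/2) * r ^ (-1-p) :=
          mul_le_mul_of_nonneg_right hb (Real.rpow_nonneg hr0.le _)
      _ = (u^2/2) * (r^(2:ℕ) * r ^ (-1-p)) := by ring
      _ = (u^2/2) * r ^ (1-p) := by
          congr 1
          rw [← Real.rpow_natCast r 2, ← Real.rpow_add hr0]
          congr 1
          push_cast; ring
  · intro r hr
    have hr0 : 0 < r := lt_trans one_pos hr
    have hcos : 0 ≤ 1 - Real.cos (u*r) := by linarith [Real.cos_le_one (u*r)]
    have hb : 1 - Real.cos (u*r) ≤ 2 := by linarith [Real.neg_one_le_cos (u*r)]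
    rw [abs_of_nonneg (mul_nonneg hcos (Real.rpow_nonneg hr0.le _))]
    exact mul_le_mul_of_nonneg_right hb (Real.rpow_nonneg hr0.le _)

lemma cos_repr {p : ℝ} (hp0 : 0 < p) (u : ℝ) :
    ∫ r in Ioi (0:ℝ), (1 - Real.cos (u*r)) * r ^ (-1-p)
      = |u| ^ p * ∫ r in Ioi (0:ℝ), (1 - Real.cos r) * r ^ (-1-p) := by
  rcases eq_or_ne u 0 with rfl | hu
  · simp [Real.zero_rpow hp0.ne']
  · have ha' : 0 < |u| := abs_pos.2 hu
    have habs : EqOn (fun r : ℝ => (1 - Real.cos (u*r)) * r ^ (-1-p))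
        (fun r : ℝ => (1 - Real.cos (|u| * r)) * r ^ (-1-p)) (Ioi (0:ℝ)) := by
      intro r hr
      have hr0 : (0:ℝ) < r := hr
      simp only
      rw [show |u| * r = |u * r| by rw [abs_mul, abs_of_pos hr0], Real.cos_abs]
    rw [setIntegral_congr_fun measurableSet_Ioi habs]
    have hone : |u| ^ (1+p) * |u| ^ (-1-p) = 1 := by
      rw [← Real.rpow_add ha']; norm_num
    have key : EqOn (fun r : ℝ => (1 - Real.cos (|u| * r)) * r ^ (-1-p))
        (fun r : ℝ => |u| ^ (1+p) * ((1 - Real.cos (|u| * r)) * (|u| * r) ^ (-1-p)))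
        (Ioi (0:ℝ)) := by
      intro r hr
      have hr0 : (0:ℝ) < r := hr
      simp only
      rw [Real.mul_rpow ha'.le hr0.le]
      calc (1 - Real.cos (|u| * r)) * r ^ (-1-p)
          = (|u| ^ (1+p) * |u| ^ (-1-p)) * ((1 - Real.cos (|u| * r)) * r ^ (-1-p)) := by
            rw [hone, one_mul]
        _ = |u| ^ (1+p) * ((1 - Real.cos (|u| * r)) * (|u| ^ (-1-p) * r ^ (-1-p))) := by ring
    rw [setIntegral_congr_fun measurableSet_Ioi key, MeasureTheory.integral_const_mul,
      scale_Ioi (fun y : ℝ => (1 - Real.cos y) * y ^ (-1-p)) ha', ← mul_assoc]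
    congr 1
    rw [← Real.rpow_neg_one |u|, ← Real.rpow_add ha']
    congr 1
    ring

lemma cos_repr_pos {p : ℝ} (hp0 : 0 < p) (hp2 : p < 2) :
    0 < ∫ r in Ioi (0:ℝ), (1 - Real.cos r) * r ^ (-1-p) := by
  have hint : IntegrableOn (fun r : ℝ => (1 - Real.cos (1*r)) * r ^ (-1-p)) (Ioi (0:ℝ)) :=
    integrableOn_one_sub_cos hp0 hp2 1
  simp only [one_mul] at hint
  rw [setIntegral_pos_iff_support_of_nonneg_ae ?nonneg hint]
  case nonneg =>
    refine (ae_restrict_iff' measurableSet_Ioi).2 (Filter.Eventually.of_forall fun r hr => ?_)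
    have hr0 : (0:ℝ) < r := hr
    exact mul_nonneg (by linarith [Real.cos_le_one r]) (Real.rpow_nonneg hr0.le _)
  · have hsub : Ioo (0:ℝ) 1 ⊆
        Function.support (fun r : ℝ => (1 - Real.cos r) * r ^ (-1-p)) ∩ Ioi 0 := by
      intro r hr
      have hr0 : (0:ℝ) < r := hr.1
      have hπ : (1:ℝ) < 2 * Real.pi := by
        have := Real.pi_gt_three; linarith
      have hcos : Real.cos r < 1 := by
        rcases lt_or_ge (Real.cos r) 1 with h | h
        · exact h
        · exfalso
          have heq : Real.cos r = 1 := le_antisymm (Real.cos_le_one r) h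
          have := (Real.cos_eq_one_iff_of_lt_of_lt
            (by linarith : -(2*Real.pi) < r) (by linarith [hr.2] : r < 2*Real.pi)).1 heq
          exact hr0.ne' this
      exact ⟨ne_of_gt (mul_pos (by linarith) (Real.rpow_pos_of_pos hr0 _)), hr0⟩
    calc (0:ENNReal) < volume (Ioo (0:ℝ) 1) := by
          rw [Real.volume_Ioo]; norm_num
      _ ≤ _ := measure_mono hsub

lemma knd_abs_rpow {p : ℝ} (hp0 : 0 < p) (hp2 : p < 2) :
    KND (fun u v : ℝ => |u - v| ^ p) := by
  intro n x c hc
  simp only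
  set Cp := ∫ r in Ioi (0:ℝ), (1 - Real.cos r) * r ^ (-1-p) with hCpdef
  have hCp : 0 < Cp := cos_repr_pos hp0 hp2
  have key : Cp * (∑ i, ∑ j, c i * c j * |x i - x j| ^ p)
      = ∫ r in Ioi (0:ℝ), ∑ i, ∑ j,
          c i * c j * ((1 - Real.cos ((x i - x j) * r)) * r ^ (-1-p)) := by
    rw [Finset.mul_sum]
    calc ∑ i, Cp * ∑ j, c i * c j * |x i - x j| ^ p
        = ∑ i, ∑ j, c i * c j * (|x i - x j| ^ p * Cp) := by
          refine Finset.sum_congr rfl fun i _ => ?_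
          rw [Finset.mul_sum]
          exact Finset.sum_congr rfl fun j _ => by ring
      _ = ∑ i, ∑ j, ∫ r in Ioi (0:ℝ),
            c i * c j * ((1 - Real.cos ((x i - x j) * r)) * r ^ (-1-p)) := by
          refine Finset.sum_congr rfl fun i _ => Finset.sum_congr rfl fun j _ => ?_
          rw [← cos_repr hp0 (x i - x j), MeasureTheory.integral_const_mul]
      _ = ∫ r in Ioi (0:ℝ), ∑ i, ∑ j,
            c i * c j * ((1 - Real.cos ((x i - x j) * r)) * r ^ (-1-p)) := by
          rw [MeasureTheory.integral_finset_sum]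
          · exact Finset.sum_congr rfl fun i _ => by
              rw [MeasureTheory.integral_finset_sum]
              intro j _
              exact ((integrableOn_one_sub_cos hp0 hp2 (x i - x j)).const_mul _)
          · intro i _
            exact integrable_finset_sum _ fun j _ =>
              ((integrableOn_one_sub_cos hp0 hp2 (x i - x j)).const_mul _)
  have hneg : (∫ r in Ioi (0:ℝ), ∑ i, ∑ j,
      c i * c j * ((1 - Real.cos ((x i - x j) * r)) * r ^ (-1-p))) ≤ 0 := by
    refine integral_nonpos_of_ae ?_
    refine (ae_restrict_iff' measurableSet_Ioi).2 (Filter.Eventually.of_forall fun r hr => ?_)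
    have hr0 : (0:ℝ) < r := hr
    simp only [Pi.zero_apply]
    have factor : ∑ i, ∑ j, c i * c j * ((1 - Real.cos ((x i - x j) * r)) * r ^ (-1-p))
        = (∑ i, ∑ j, c i * c j * (1 - Real.cos ((x i - x j) * r))) * r ^ (-1-p) := by
      rw [Finset.sum_mul]
      refine Finset.sum_congr rfl fun i _ => ?_
      rw [Finset.sum_mul]
      exact Finset.sum_congr rfl fun j _ => by ring
    rw [factor]
    refine mul_nonpos_of_nonpos_of_nonneg ?_ (Real.rpow_nonneg hr0.le _)
    have trig : ∑ i, ∑ j, c i * c j * (1 - Real.cos ((x i - x j) * r))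
        = (∑ i, c i) * (∑ j, c j)
          - ((∑ i, c i * Real.cos (x i * r)) * (∑ j, c j * Real.cos (x j * r))
            + (∑ i, c i * Real.sin (x i * r)) * (∑ j, c j * Real.sin (x j * r))) := by
      rw [Finset.sum_mul_sum, Finset.sum_mul_sum, Finset.sum_mul_sum]
      simp only [← Finset.sum_add_distrib, ← Finset.sum_sub_distrib]
      refine Finset.sum_congr rfl fun i _ => Finset.sum_congr rfl fun j _ => ?_
      rw [sub_mul, Real.cos_sub]
      ring
    rw [trig, hc]
    nlinarith [mul_self_nonneg (∑ i, c i * Real.cos (x i * r)),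
      mul_self_nonneg (∑ i, c i * Real.sin (x i * r))]
  nlinarith [key, hCp, hneg]

lemma knd_sq : KND (fun u v : ℝ => |u - v| ^ (2:ℝ)) := by
  intro n x c hc
  simp only
  have habs : ∀ i j, |x i - x j| ^ (2:ℝ) = (x i - x j)^(2:ℕ) := by
    intro i j
    have h2 : |x i - x j| ^ (2:ℝ) = |x i - x j| ^ (2:ℕ) := by
      rw [← Real.rpow_natCast]; norm_num
    rw [h2, sq_abs]
  calc ∑ i, ∑ j, c i * c j * |x i - x j| ^ (2:ℝ)
      = ∑ i, ∑ j, ((c i * x i^(2:ℕ)) * c j + c i * (c j * x j^(2:ℕ))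
          - 2 * ((c i * x i) * (c j * x j))) := by
        refine Finset.sum_congr rfl fun i _ => Finset.sum_congr rfl fun j _ => ?_
        rw [habs i j]
        ring
    _ = (∑ i, c i * x i^(2:ℕ)) * (∑ j, c j) + (∑ i, c i) * (∑ j, c j * x j^(2:ℕ))
          - 2 * ((∑ i, c i * x i) * (∑ j, c j * x j)) := by
        rw [Finset.sum_mul_sum, Finset.sum_mul_sum, Finset.sum_mul_sum, Finset.mul_sum]
        simp only [Finset.mul_sum, Finset.sum_add_distrib, Finset.sum_sub_distrib]
    _ ≤ 0 := by
        rw [hc]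
        nlinarith [mul_self_nonneg (∑ i, c i * x i)]

lemma knd_weighted {p : ℝ} (hp1 : 1 ≤ p) (hp2 : p ≤ 2) {m : ℕ} (w : Fin m → ℝ)
    (hw : ∀ e, 0 ≤ w e) :
    KND (fun a b : Fin m → ℝ => ∑ e, w e * |a e - b e| ^ p) := by
  intro n x c hc
  simp only
  have hswap : ∑ i, ∑ j, c i * c j * ∑ e, w e * |x i e - x j e| ^ p
      = ∑ e, w e * ∑ i, ∑ j, c i * c j * |x i e - x j e| ^ p := by
    calc ∑ i, ∑ j, c i * c j * ∑ e, w e * |x i e - x j e| ^ p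
        = ∑ i, ∑ e, ∑ j, w e * (c i * c j * |x i e - x j e| ^ p) := by
          refine Finset.sum_congr rfl fun i _ => ?_
          rw [Finset.sum_comm]
          refine Finset.sum_congr rfl fun j _ => ?_
          rw [Finset.mul_sum]
          exact Finset.sum_congr rfl fun e _ => by ring
      _ = ∑ e, ∑ i, ∑ j, w e * (c i * c j * |x i e - x j e| ^ p) := Finset.sum_comm
      _ = ∑ e, w e * ∑ i, ∑ j, c i * c j * |x i e - x j e| ^ p := by
          refine Finset.sum_congr rfl fun e _ => ?_
          rw [Finset.mul_sum]
          exact Finset.sum_congr rfl fun i _ => by rw [Finset.mul_sum]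
  rw [hswap]
  refine Finset.sum_nonpos fun e _ => ?_
  have h1d : ∑ i, ∑ j, c i * c j * |x i e - x j e| ^ p ≤ 0 := by
    rcases eq_or_lt_of_le hp2 with h2 | h2
    · subst h2
      exact knd_sq n (fun i => x i e) c hc
    · exact knd_abs_rpow (by linarith) h2 n (fun i => x i e) c hc
  exact mul_nonpos_of_nonneg_of_nonpos (hw e) h1d

lemma knd_rpow_of_knd {κ : Type*} {N : κ → κ → ℝ}
    (hsymm : ∀ x y, N x y = N y x) (hdiag : ∀ x, N x x = 0)
    (hnonneg : ∀ x y, 0 ≤ N x y) (hND : KND N)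
    {β : ℝ} (hβ0 : 0 < β) (hβ1 : β < 1) : KND (fun x y => N x y ^ β) := by
  intro n x c hc
  simp only
  set Cβ := ∫ s in Ioi (0:ℝ), (1 - Real.exp (-s)) * s ^ (-1-β) with hCdef
  have hCβ : 0 < Cβ := exp_repr_pos hβ0 hβ1
  have key : Cβ * (∑ i, ∑ j, c i * c j * N (x i) (x j) ^ β)
      = ∫ s in Ioi (0:ℝ), ∑ i, ∑ j,
          c i * c j * ((1 - Real.exp (-(N (x i) (x j) * s))) * s ^ (-1-β)) := by
    rw [Finset.mul_sum]
    calc ∑ i, Cβ * ∑ j, c i * c j * N (x i) (x j) ^ β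
        = ∑ i, ∑ j, c i * c j * (N (x i) (x j) ^ β * Cβ) := by
          refine Finset.sum_congr rfl fun i _ => ?_
          rw [Finset.mul_sum]
          exact Finset.sum_congr rfl fun j _ => by ring
      _ = ∑ i, ∑ j, ∫ s in Ioi (0:ℝ),
            c i * c j * ((1 - Real.exp (-(N (x i) (x j) * s))) * s ^ (-1-β)) := by
          refine Finset.sum_congr rfl fun i _ => Finset.sum_congr rfl fun j _ => ?_
          rw [← exp_repr hβ0 (hnonneg (x i) (x j)), MeasureTheory.integral_const_mul]
      _ = ∫ s in Ioi (0:ℝ), ∑ i, ∑ j,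
            c i * c j * ((1 - Real.exp (-(N (x i) (x j) * s))) * s ^ (-1-β)) := by
          rw [MeasureTheory.integral_finset_sum]
          · exact Finset.sum_congr rfl fun i _ => by
              rw [MeasureTheory.integral_finset_sum]
              intro j _
              exact ((integrableOn_one_sub_exp hβ0 hβ1 (hnonneg (x i) (x j))).const_mul _)
          · intro i _
            exact integrable_finset_sum _ fun j _ =>
              ((integrableOn_one_sub_exp hβ0 hβ1 (hnonneg (x i) (x j))).const_mul _)
  have hneg : (∫ s in Ioi (0:ℝ), ∑ i, ∑ j,
      c i * c j * ((1 - Real.exp (-(N (x i) (x j) * s))) * s ^ (-1-β))) ≤ 0 := by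
    refine integral_nonpos_of_ae ?_
    refine (ae_restrict_iff' measurableSet_Ioi).2 (Filter.Eventually.of_forall fun s hs => ?_)
    have hs0 : (0:ℝ) < s := hs
    simp only [Pi.zero_apply]
    have factor : ∑ i, ∑ j, c i * c j * ((1 - Real.exp (-(N (x i) (x j) * s))) * s ^ (-1-β))
        = (∑ i, ∑ j, c i * c j * (1 - Real.exp (-(N (x i) (x j) * s)))) * s ^ (-1-β) := by
      rw [Finset.sum_mul]
      refine Finset.sum_congr rfl fun i _ => ?_
      rw [Finset.sum_mul]
      exact Finset.sum_congr rfl fun j _ => by ring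
    rw [factor]
    refine mul_nonpos_of_nonpos_of_nonneg ?_ (Real.rpow_nonneg hs0.le _)
    have split : ∑ i, ∑ j, c i * c j * (1 - Real.exp (-(N (x i) (x j) * s)))
        = (∑ i, c i) * (∑ j, c j)
          - ∑ i, ∑ j, c i * c j * Real.exp (-(s * N (x i) (x j))) := by
      rw [Finset.sum_mul_sum]
      simp only [← Finset.sum_sub_distrib]
      refine Finset.sum_congr rfl fun i _ => Finset.sum_congr rfl fun j _ => ?_
      rw [mul_comm (N (x i) (x j)) s]
      ring
    rw [split, hc]
    have := kpd_exp_of_knd hsymm hdiag hND hs0.le n x c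
    linarith
  nlinarith [key, hCβ, hneg]

/-- For `1 ≤ p ≤ 2`, `t > 0` and nonnegative weights, the kernel
`(x, z) ↦ exp(-t (∑_e w_e |x_e - z_e|^p)^{1/p})` on `ℝ^m` is positive definite. -/
theorem exp_neg_weighted_lp_dist_positive_definite
    (p : ℝ) (hp1 : 1 ≤ p) (hp2 : p ≤ 2)
    (t : ℝ) (ht : 0 < t)
    (m : ℕ) (hm : 0 < m) (w : Fin m → ℝ) (hw : ∀ e, 0 ≤ w e) :
    ∀ (n : ℕ), 1 ≤ n → ∀ (x : Fin n → Fin m → ℝ) (c : Fin n → ℝ),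
      0 ≤ ∑ i, ∑ j, c i * c j *
        Real.exp (-(t * (∑ e, w e * |x i e - x j e| ^ p) ^ (1 / p))) := by
  intro n hn x c
  have hp0 : (0:ℝ) < p := by linarith
  set N : (Fin m → ℝ) → (Fin m → ℝ) → ℝ := fun a b => ∑ e, w e * |a e - b e| ^ p with hNdef
  have hsymm : ∀ a b, N a b = N b a := by
    intro a b
    exact Finset.sum_congr rfl fun e _ => by rw [abs_sub_comm]
  have hnonneg : ∀ a b, 0 ≤ N a b := fun a b =>
    Finset.sum_nonneg fun e _ => mul_nonneg (hw e) (Real.rpow_nonneg (abs_nonneg _) _)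
  have hdiag : ∀ a, N a a = 0 := by
    intro a
    simp only [hNdef, sub_self, abs_zero, Real.zero_rpow hp0.ne', mul_zero, Finset.sum_const_zero]
  have hND : KND N := knd_weighted hp1 hp2 w hw
  set N' : (Fin m → ℝ) → (Fin m → ℝ) → ℝ := fun a b => N a b ^ (1/p) with hN'def
  have hND' : KND N' := by
    rcases eq_or_lt_of_le hp1 with h1 | h1
    · intro n' x' c' hc'
      have : (1:ℝ)/p = 1 := by rw [← h1]; norm_num
      simpa [hN'def, this, Real.rpow_one] using hND n' x' c' hc'
    · exact knd_rpow_of_knd hsymm hdiag hnonneg hND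
        (by positivity) ((div_lt_one hp0).2 h1)
  have hsymm' : ∀ a b, N' a b = N' b a := fun a b => by simp only [hN'def, hsymm a b]
  have hdiag' : ∀ a, N' a a = 0 := fun a => by
    simp only [hN'def, hdiag a]
    rw [Real.zero_rpow]
    positivity
  exact kpd_exp_of_knd hsymm' hdiag' hND' ht.le n x c
end

section
/- Let μ and ν be Borel probability measures on ℝ supported in the interval [0, 1], and let 1 ≤ p < ∞. Then the 1-Wasserstein distance with cost c(x, y) = |x − y| satisfies W_1(μ, ν) ≤ ( ∫_0^1 | μ((t, 1]) − ν((t, 1]) |^p dt )^{1/p}, where W_1(μ, ν) := inf { ∫_{ℝ×ℝ} |x − y| π(dx, dy) : π a Borel probability measure on ℝ × ℝ whose first marginal is μ and whose second marginal is ν }. -/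
open MeasureTheory Set ProbabilityTheory Filter
open scoped ENNReal

namespace WassAux

noncomputable def quant (μ : Measure ℝ) (u : ℝ) : ℝ :=
  sInf ({x | u ≤ cdf μ x ∨ 2 ≤ x} ∩ Ici 0)

lemma quant_set_nonempty (μ : Measure ℝ) (u : ℝ) :
    ({x | u ≤ cdf μ x ∨ 2 ≤ x} ∩ Ici 0).Nonempty :=
  ⟨2, Or.inr le_rfl, by norm_num⟩

lemma quant_set_bddBelow (μ : Measure ℝ) (u : ℝ) :
    BddBelow ({x | u ≤ cdf μ x ∨ 2 ≤ x} ∩ Ici 0) :=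
  ⟨0, fun x hx => hx.2⟩

lemma quant_mono (μ : Measure ℝ) : Monotone (quant μ) := by
  intro u v huv
  exact csInf_le_csInf (quant_set_bddBelow μ u) (quant_set_nonempty μ v)
    (fun x hx => ⟨hx.1.imp_left (le_trans huv) , hx.2⟩)

lemma quant_nonneg (μ : Measure ℝ) (u : ℝ) : 0 ≤ quant μ u :=
  le_csInf (quant_set_nonempty μ u) (fun x hx => hx.2)

variable {μ : Measure ℝ} [IsProbabilityMeasure μ]

lemma cdf_one_of_support (hμ : μ (Icc (0 : ℝ) 1) = 1) : cdf μ 1 = 1 := by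
  rw [cdf_eq_real, measureReal_def]
  have h1 : μ (Iic (1 : ℝ)) = 1 := by
    refine le_antisymm prob_le_one ?_
    rw [← hμ]; exact measure_mono (fun x hx => hx.2)
  simp [h1]

lemma cdf_neg_of_support (hμ : μ (Icc (0 : ℝ) 1) = 1) {x : ℝ} (hx : x < 0) :
    cdf μ x = 0 := by
  rw [cdf_eq_real, measureReal_def]
  have h0 : μ (Iic x) = 0 := by
    have hc : μ (Icc (0 : ℝ) 1)ᶜ = 0 := by
      rw [measure_compl measurableSet_Icc (measure_ne_top μ _), hμ, measure_univ, tsub_self]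
    refine measure_mono_null (fun y hy => ?_) hc
    intro h
    exact absurd (le_trans h.1 hy) (not_le.mpr hx)
  simp [h0]

lemma quant_le_one (hμ : μ (Icc (0 : ℝ) 1) = 1) {u : ℝ} (hu : u ≤ 1) : quant μ u ≤ 1 :=
  csInf_le (quant_set_bddBelow μ u) ⟨Or.inl (by rw [cdf_one_of_support hμ]; exact hu), by norm_num⟩

lemma le_cdf_quant (hμ : μ (Icc (0 : ℝ) 1) = 1) {u : ℝ} (hu : u ∈ Ioo (0 : ℝ) 1) :
    u ≤ cdf μ (quant μ u) := by
  by_contra h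
  push_neg at h
  have hrc := (cdf μ).right_continuous (quant μ u)
  have hev : ∀ᶠ y in nhdsWithin (quant μ u) (Ici (quant μ u)), cdf μ y < u :=
    hrc.eventually (Filter.Tendsto.eventually_lt_const h tendsto_id) |>.mono (fun _ h => h)
  obtain ⟨b, hb, hball⟩ := (nhdsGE_basis (quant μ u)).eventually_iff.mp hev
  have hQ2 : quant μ u < 2 := lt_of_le_of_lt (quant_le_one hμ hu.2.le) (by norm_num)
  have hlb : min b 2 ≤ quant μ u := by
    refine le_csInf (quant_set_nonempty μ u) (fun y hy => ?_)
    have hQy : quant μ u ≤ y := csInf_le (quant_set_bddBelow μ u) hy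
    rcases hy.1 with hy1 | hy1
    · by_contra hc
      push_neg at hc
      exact absurd hy1 (not_le.mpr (hball ⟨hQy, lt_of_lt_of_le hc (min_le_left _ _)⟩))
    · exact le_trans (min_le_right _ _) hy1
  exact absurd hlb (not_le.mpr (lt_min hb hQ2))

end WassAux

namespace WassAux

variable {μ : Measure ℝ} [IsProbabilityMeasure μ]

lemma quant_le_iff (hμ : μ (Icc (0 : ℝ) 1) = 1) {u : ℝ} (hu : u ∈ Ioo (0 : ℝ) 1) (x : ℝ) :
    quant μ u ≤ x ↔ u ≤ cdf μ x := by
  constructor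
  · intro h
    exact le_trans (le_cdf_quant hμ hu) (monotone_cdf μ h)
  · intro h
    have hx : (0 : ℝ) ≤ x := by
      by_contra hc
      push_neg at hc
      rw [cdf_neg_of_support hμ hc] at h
      exact absurd h (not_le.mpr hu.1)
    exact csInf_le (quant_set_bddBelow μ u) ⟨Or.inl h, hx⟩

lemma lt_quant_iff (hμ : μ (Icc (0 : ℝ) 1) = 1) {u : ℝ} (hu : u ∈ Ioo (0 : ℝ) 1) (x : ℝ) :
    x < quant μ u ↔ cdf μ x < u := by
  rw [← not_le, ← not_le, quant_le_iff hμ hu]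

lemma map_quant (hμ : μ (Icc (0 : ℝ) 1) = 1) :
    Measure.map (quant μ) (volume.restrict (Ioo (0:ℝ) 1)) = μ := by
  refine Measure.ext_of_Iic _ _ (fun x => ?_)
  rw [Measure.map_apply (quant_mono μ).measurable measurableSet_Iic,
    Measure.restrict_apply ((quant_mono μ).measurable measurableSet_Iic)]
  have hc0 : 0 ≤ cdf μ x := cdf_nonneg μ x
  have hc1 : cdf μ x ≤ 1 := cdf_le_one μ x
  have hset : quant μ ⁻¹' Iic x ∩ Ioo 0 1 = Iic (cdf μ x) ∩ Ioo 0 1 := by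
    ext u
    simp only [mem_inter_iff, mem_preimage, mem_Iic, and_congr_left_iff]
    intro hu
    rw [quant_le_iff hμ hu x]
  rw [hset]
  have h1 : volume (Iic (cdf μ x) ∩ Ioo (0:ℝ) 1) ≤ ENNReal.ofReal (cdf μ x) := by
    have : volume (Iic (cdf μ x) ∩ Ioo (0:ℝ) 1) ≤ volume (Ioc (0:ℝ) (cdf μ x)) :=
      measure_mono (fun u hu => mem_Ioc.mpr ⟨hu.2.1, hu.1⟩)
    rwa [Real.volume_Ioc, sub_zero] at this
  have h2 : ENNReal.ofReal (cdf μ x) ≤ volume (Iic (cdf μ x) ∩ Ioo (0:ℝ) 1) := by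
    have : volume (Ioo (0:ℝ) (cdf μ x)) ≤ volume (Iic (cdf μ x) ∩ Ioo (0:ℝ) 1) :=
      measure_mono (fun u hu => mem_inter (le_of_lt (mem_Ioo.mp hu).2)
        ⟨(mem_Ioo.mp hu).1, lt_of_lt_of_le (mem_Ioo.mp hu).2 hc1⟩)
    rwa [Real.volume_Ioo, sub_zero] at this
  rw [le_antisymm h1 h2, ofReal_cdf]

lemma quant_mem (hμ : μ (Icc (0 : ℝ) 1) = 1) {u : ℝ} (hu : u ∈ Ioo (0 : ℝ) 1) :
    quant μ u ∈ Icc (0:ℝ) 1 :=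
  ⟨quant_nonneg μ u, quant_le_one hμ hu.2.le⟩

end WassAux

namespace WassAux

lemma vol_sandwich {m M : ℝ} (h0 : 0 ≤ m) (h1 : M ≤ 1) {T : Set ℝ}
    (hsub : T ⊆ Icc m M) (hsup : Ioo m M ⊆ T) :
    volume (T ∩ Ioo (0:ℝ) 1) = ENNReal.ofReal (M - m) := by
  apply le_antisymm
  · have hsub' : T ∩ Ioo 0 1 ⊆ Icc m M := fun t ht => hsub ht.1
    have h : volume (T ∩ Ioo (0:ℝ) 1) ≤ volume (Icc m M) := measure_mono hsub'
    rwa [Real.volume_Icc] at h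
  · have hss : Ioo m M ⊆ T ∩ Ioo 0 1 := fun t ht =>
      ⟨hsup ht, lt_of_le_of_lt h0 ht.1, lt_of_lt_of_le ht.2 h1⟩
    have h : volume (Ioo m M) ≤ volume (T ∩ Ioo (0:ℝ) 1) := measure_mono hss
    rwa [Real.volume_Ioo] at h

lemma xor_lt_subset (a b : ℝ) :
    {t : ℝ | ¬(t < a ↔ t < b)} ⊆ Icc (min a b) (max a b) := by
  intro t ht
  simp only [mem_setOf_eq] at ht
  constructor
  · by_contra h
    push_neg at h
    exact ht (iff_of_true (lt_of_lt_of_le h (min_le_left a b))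
      (lt_of_lt_of_le h (min_le_right a b)))
  · by_contra h
    push_neg at h
    exact ht (iff_of_false (not_lt.mpr (le_of_lt (lt_of_le_of_lt (le_max_left a b) h)))
      (not_lt.mpr (le_of_lt (lt_of_le_of_lt (le_max_right a b) h))))

lemma xor_lt_supset (a b : ℝ) :
    Ioo (min a b) (max a b) ⊆ {t : ℝ | ¬(t < a ↔ t < b)} := by
  intro t ht hiff
  rcases le_total a b with h | h
  · rw [min_eq_left h, max_eq_right h] at ht
    exact absurd (hiff.mpr ht.2) (not_lt.mpr ht.1.le)
  · rw [min_eq_right h, max_eq_left h] at ht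
    exact absurd (hiff.mp ht.2) (not_lt.mpr ht.1.le)

lemma xor_gt_subset (a b : ℝ) :
    {u : ℝ | ¬(a < u ↔ b < u)} ⊆ Icc (min a b) (max a b) := by
  intro u hu
  simp only [mem_setOf_eq] at hu
  constructor
  · by_contra h
    push_neg at h
    exact hu (iff_of_false (not_lt.mpr (le_of_lt (lt_of_lt_of_le h (min_le_left a b))))
      (not_lt.mpr (le_of_lt (lt_of_lt_of_le h (min_le_right a b)))))
  · by_contra h
    push_neg at h
    exact hu (iff_of_true (lt_of_le_of_lt (le_max_left a b) h)
      (lt_of_le_of_lt (le_max_right a b) h))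

lemma xor_gt_supset (a b : ℝ) :
    Ioo (min a b) (max a b) ⊆ {u : ℝ | ¬(a < u ↔ b < u)} := by
  intro u hu hiff
  rcases le_total a b with h | h
  · rw [min_eq_left h, max_eq_right h] at hu
    exact absurd (hiff.mp hu.1) (not_lt.mpr hu.2.le)
  · rw [min_eq_right h, max_eq_left h] at hu
    exact absurd (hiff.mpr hu.1) (not_lt.mpr hu.2.le)

lemma xor_lt_measurable (a b : ℝ) : MeasurableSet {t : ℝ | ¬(t < a ↔ t < b)} := by
  have : {t : ℝ | ¬(t < a ↔ t < b)} = (Iio a \ Iio b) ∪ (Iio b \ Iio a) := by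
    ext t; simp only [mem_setOf_eq, mem_union, mem_diff, mem_Iio]; tauto
  rw [this]
  exact ((measurableSet_Iio.diff measurableSet_Iio).union
    (measurableSet_Iio.diff measurableSet_Iio))

lemma xor_gt_measurable (a b : ℝ) : MeasurableSet {u : ℝ | ¬(a < u ↔ b < u)} := by
  have : {u : ℝ | ¬(a < u ↔ b < u)} = (Ioi a \ Ioi b) ∪ (Ioi b \ Ioi a) := by
    ext u; simp only [mem_setOf_eq, mem_union, mem_diff, mem_Ioi]; tauto
  rw [this]
  exact ((measurableSet_Ioi.diff measurableSet_Ioi).union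
    (measurableSet_Ioi.diff measurableSet_Ioi))

lemma lintegral_xor_eq {a b : ℝ} (ha : a ∈ Icc (0:ℝ) 1) (hb : b ∈ Icc (0:ℝ) 1) :
    ∫⁻ t in Ioo (0:ℝ) 1, {t : ℝ | ¬(t < a ↔ t < b)}.indicator (fun _ => (1:ℝ≥0∞)) t
      = ENNReal.ofReal (|a - b|) := by
  rw [lintegral_indicator (xor_lt_measurable a b), setLIntegral_one,
    Measure.restrict_apply (xor_lt_measurable a b),
    vol_sandwich (le_min ha.1 hb.1) (max_le ha.2 hb.2) (xor_lt_subset a b) (xor_lt_supset a b),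
    max_sub_min_eq_abs, abs_sub_comm]

lemma lintegral_xor_gt_eq {a b : ℝ} (ha : a ∈ Icc (0:ℝ) 1) (hb : b ∈ Icc (0:ℝ) 1) :
    ∫⁻ u in Ioo (0:ℝ) 1, {u : ℝ | ¬(a < u ↔ b < u)}.indicator (fun _ => (1:ℝ≥0∞)) u
      = ENNReal.ofReal (|a - b|) := by
  rw [lintegral_indicator (xor_gt_measurable a b), setLIntegral_one,
    Measure.restrict_apply (xor_gt_measurable a b),
    vol_sandwich (le_min ha.1 hb.1) (max_le ha.2 hb.2) (xor_gt_subset a b) (xor_gt_supset a b),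
    max_sub_min_eq_abs, abs_sub_comm]

end WassAux

namespace WassAux

variable {μ ν : Measure ℝ} [IsProbabilityMeasure μ] [IsProbabilityMeasure ν]

lemma lintegral_abs_quant_sub (hμ : μ (Icc (0 : ℝ) 1) = 1) (hν : ν (Icc (0 : ℝ) 1) = 1) :
    ∫⁻ u in Ioo (0:ℝ) 1, ENNReal.ofReal (|quant μ u - quant ν u|)
      = ∫⁻ t in Ioo (0:ℝ) 1, ENNReal.ofReal (|cdf μ t - cdf ν t|) := by
  set S : Set (ℝ × ℝ) := {p : ℝ × ℝ | ¬(cdf μ p.2 < p.1 ↔ cdf ν p.2 < p.1)} with hS_def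
  have hA : MeasurableSet {p : ℝ × ℝ | cdf μ p.2 < p.1} :=
    measurableSet_lt ((monotone_cdf μ).measurable.comp measurable_snd) measurable_fst
  have hB : MeasurableSet {p : ℝ × ℝ | cdf ν p.2 < p.1} :=
    measurableSet_lt ((monotone_cdf ν).measurable.comp measurable_snd) measurable_fst
  have hS : MeasurableSet S := by
    have : S = ({p : ℝ × ℝ | cdf μ p.2 < p.1} \ {p : ℝ × ℝ | cdf ν p.2 < p.1}) ∪
        ({p : ℝ × ℝ | cdf ν p.2 < p.1} \ {p : ℝ × ℝ | cdf μ p.2 < p.1}) := by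
      ext p; simp only [hS_def, mem_setOf_eq, mem_union, mem_diff, mem_setOf_eq]; tauto
    rw [this]
    exact (hA.diff hB).union (hB.diff hA)
  have hf : Measurable (Function.uncurry fun u t => S.indicator (fun _ => (1:ℝ≥0∞)) (u, t)) := by
    have : (Function.uncurry fun u t => S.indicator (fun _ => (1:ℝ≥0∞)) (u, t))
        = S.indicator (fun _ => (1:ℝ≥0∞)) := by
      funext p; rfl
    rw [this]
    exact measurable_const.indicator hS
  have hswap := lintegral_lintegral_swap (μ := volume.restrict (Ioo (0:ℝ) 1))
    (ν := volume.restrict (Ioo (0:ℝ) 1)) hf.aemeasurable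
  calc ∫⁻ u in Ioo (0:ℝ) 1, ENNReal.ofReal (|quant μ u - quant ν u|)
      = ∫⁻ u in Ioo (0:ℝ) 1, ∫⁻ t in Ioo (0:ℝ) 1,
          S.indicator (fun _ => (1:ℝ≥0∞)) (u, t) := by
        refine (setLIntegral_congr_fun_ae measurableSet_Ioo (ae_of_all _ fun u hu => ?_)).symm
        have hset : ∀ t : ℝ, ((u, t) ∈ S) = (t ∈ {t : ℝ | ¬(t < quant μ u ↔ t < quant ν u)}) := by
          intro t
          simp only [hS_def, mem_setOf_eq, lt_quant_iff hμ hu, lt_quant_iff hν hu]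
        have : (fun t => S.indicator (fun _ => (1:ℝ≥0∞)) (u, t))
            = {t : ℝ | ¬(t < quant μ u ↔ t < quant ν u)}.indicator (fun _ => (1:ℝ≥0∞)) := by
          funext t
          simp only [indicator, hset t]
        rw [this]
        exact lintegral_xor_eq (quant_mem hμ hu) (quant_mem hν hu)
    _ = ∫⁻ t in Ioo (0:ℝ) 1, ∫⁻ u in Ioo (0:ℝ) 1,
          S.indicator (fun _ => (1:ℝ≥0∞)) (u, t) := hswap
    _ = ∫⁻ t in Ioo (0:ℝ) 1, ENNReal.ofReal (|cdf μ t - cdf ν t|) := by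
        refine setLIntegral_congr_fun_ae measurableSet_Ioo (ae_of_all _ fun t _ => ?_)
        have : (fun u => S.indicator (fun _ => (1:ℝ≥0∞)) (u, t))
            = {u : ℝ | ¬(cdf μ t < u ↔ cdf ν t < u)}.indicator (fun _ => (1:ℝ≥0∞)) := by
          funext u; rfl
        rw [this]
        exact lintegral_xor_gt_eq ⟨cdf_nonneg μ t, cdf_le_one μ t⟩ ⟨cdf_nonneg ν t, cdf_le_one ν t⟩

end WassAux

namespace WassAux

lemma int_le_rpow {g : ℝ → ℝ} (hmg : Measurable g) (h0 : ∀ t, 0 ≤ g t) (h1 : ∀ t, g t ≤ 1)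
    {p : ℝ} (hp : 1 ≤ p) :
    ∫ t in Ioo (0:ℝ) 1, g t ≤ (∫ t in Ioo (0:ℝ) 1, g t ^ p) ^ (1/p) := by
  rcases eq_or_lt_of_le hp with hp1 | hp1
  · subst hp1
    simp [Real.rpow_one]
  · have hpq : p.HolderConjugate (p / (p - 1)) := Real.HolderConjugate.conjExponent hp1
    have hmeas : AEMeasurable (fun t => ENNReal.ofReal (g t))
        (volume.restrict (Ioo (0:ℝ) 1)) := (ENNReal.measurable_ofReal.comp hmg).aemeasurable
    have key := ENNReal.lintegral_mul_le_Lp_mul_Lq (volume.restrict (Ioo (0:ℝ) 1)) hpq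
      hmeas aemeasurable_const (g := fun _ => (1:ℝ≥0∞))
    simp only [Pi.mul_apply, mul_one, ENNReal.one_rpow, lintegral_const,
      MeasureTheory.Measure.restrict_apply MeasurableSet.univ, univ_inter, Real.volume_Ioo,
      sub_zero, ENNReal.ofReal_one, one_mul, ENNReal.one_rpow] at key
    -- key : ∫⁻ ofReal (g t) ≤ (∫⁻ (ofReal (g t))^p)^(1/p)
    have hLp_le : ∫⁻ t in Ioo (0:ℝ) 1, (ENNReal.ofReal (g t)) ^ p ≤ 1 := by
      calc ∫⁻ t in Ioo (0:ℝ) 1, (ENNReal.ofReal (g t)) ^ p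
          ≤ ∫⁻ _ in Ioo (0:ℝ) 1, 1 := by
            refine lintegral_mono (fun t => ?_)
            refine ENNReal.rpow_le_one ?_ (le_trans zero_le_one hp)
            exact ENNReal.ofReal_le_one.mpr (h1 t)
        _ = 1 := by simp
    have hLp_ne : ∫⁻ t in Ioo (0:ℝ) 1, (ENNReal.ofReal (g t)) ^ p ≠ ⊤ :=
      ne_top_of_le_ne_top ENNReal.one_ne_top hLp_le
    have hL1 : ∫ t in Ioo (0:ℝ) 1, g t
        = (∫⁻ t in Ioo (0:ℝ) 1, ENNReal.ofReal (g t)).toReal := by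
      rw [integral_eq_lintegral_of_nonneg_ae (ae_of_all _ h0) hmg.aestronglyMeasurable]
    have hLp : ∫ t in Ioo (0:ℝ) 1, g t ^ p
        = (∫⁻ t in Ioo (0:ℝ) 1, (ENNReal.ofReal (g t)) ^ p).toReal := by
      rw [integral_eq_lintegral_of_nonneg_ae (ae_of_all _ fun t => Real.rpow_nonneg (h0 t) p)
        ((hmg.pow_const p).aestronglyMeasurable)]
      congr 1
      refine lintegral_congr (fun t => ?_)
      rw [← ENNReal.ofReal_rpow_of_nonneg (h0 t) (le_trans zero_le_one hp)]
    rw [hL1, hLp, ENNReal.toReal_rpow]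
    refine ENNReal.toReal_mono ?_ key
    exact ENNReal.rpow_ne_top_of_nonneg (by positivity) hLp_ne

end WassAux

namespace WassAux

lemma measure_Iic_one {μ : Measure ℝ} [IsProbabilityMeasure μ]
    (hμ : μ (Icc (0 : ℝ) 1) = 1) : μ (Iic (1:ℝ)) = 1 := by
  refine le_antisymm prob_le_one ?_
  rw [← hμ]; exact measure_mono (fun x hx => hx.2)

lemma toReal_Ioc {μ : Measure ℝ} [IsProbabilityMeasure μ]
    (hμ : μ (Icc (0 : ℝ) 1) = 1) {t : ℝ} (ht : t ≤ 1) :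
    (μ (Ioc t 1)).toReal = 1 - cdf μ t := by
  have hsub : μ (Ioc t 1) = 1 - μ (Iic t) := by
    rw [← Iic_sdiff_Iic, measure_diff (Iic_subset_Iic.mpr ht) measurableSet_Iic.nullMeasurableSet
      (measure_ne_top μ _), measure_Iic_one hμ]
  rw [hsub, ENNReal.toReal_sub_of_le prob_le_one ENNReal.one_ne_top, ENNReal.toReal_one,
    cdf_eq_real, measureReal_def]

end WassAux

open WassAux in
/-- For probability measures supported in `[0,1]` and `1 ≤ p < ∞`, the 1-Wasserstein distance
with cost `|x - y|` is bounded by `(∫_0^1 |μ((t,1]) - ν((t,1])|^p dt)^{1/p}`. -/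
theorem wasserstein_one_le_sobolev_transport_unit_interval
    (μ ν : Measure ℝ) [IsProbabilityMeasure μ] [IsProbabilityMeasure ν]
    (hμ : μ (Set.Icc (0 : ℝ) 1) = 1) (hν : ν (Set.Icc (0 : ℝ) 1) = 1)
    (p : ℝ) (hp : 1 ≤ p) :
    sInf {r : ℝ | ∃ π : Measure (ℝ × ℝ), IsProbabilityMeasure π ∧
        π.map Prod.fst = μ ∧ π.map Prod.snd = ν ∧
        r = ∫ z, |z.1 - z.2| ∂π} ≤
      (∫ t in (0 : ℝ)..1, |(μ (Set.Ioc t 1)).toReal - (ν (Set.Ioc t 1)).toReal| ^ p)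
        ^ (1 / p) := by
  have hk : Measurable (fun u => (quant μ u, quant ν u)) :=
    (quant_mono μ).measurable.prodMk (quant_mono ν).measurable
  haveI hP : IsProbabilityMeasure (volume.restrict (Ioo (0:ℝ) 1)) :=
    ⟨by simp⟩
  set π : Measure (ℝ × ℝ) :=
    (volume.restrict (Ioo (0:ℝ) 1)).map (fun u => (quant μ u, quant ν u)) with hπ
  haveI : IsProbabilityMeasure π := Measure.isProbabilityMeasure_map hk.aemeasurable
  have hfst : π.map Prod.fst = μ := by
    rw [hπ, Measure.map_map measurable_fst hk]
    exact map_quant hμ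
  have hsnd : π.map Prod.snd = ν := by
    rw [hπ, Measure.map_map measurable_snd hk]
    exact map_quant hν
  have hcost : (∫ z : ℝ × ℝ, |z.1 - z.2| ∂π)
      = ∫ u in Ioo (0:ℝ) 1, |quant μ u - quant ν u| := by
    rw [hπ, integral_map hk.aemeasurable
      (f := fun z : ℝ × ℝ => |z.1 - z.2|)
      ((continuous_fst.sub continuous_snd).abs.aestronglyMeasurable)]
  have hmem : (∫ z : ℝ × ℝ, |z.1 - z.2| ∂π) ∈ {r : ℝ | ∃ π : Measure (ℝ × ℝ),
      IsProbabilityMeasure π ∧ π.map Prod.fst = μ ∧ π.map Prod.snd = ν ∧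
      r = ∫ z, |z.1 - z.2| ∂π} := ⟨π, inferInstance, hfst, hsnd, rfl⟩
  refine le_trans (csInf_le ⟨0, fun r hr => ?_⟩ hmem) ?_
  · obtain ⟨π', _, _, _, rfl⟩ := hr
    exact integral_nonneg (fun z => abs_nonneg _)
  have hbridge : ∫ u in Ioo (0:ℝ) 1, |quant μ u - quant ν u|
      = ∫ t in Ioo (0:ℝ) 1, |cdf μ t - cdf ν t| := by
    rw [integral_eq_lintegral_of_nonneg_ae (f := fun u => |quant μ u - quant ν u|) (ae_of_all _ fun u => abs_nonneg _)
        (((quant_mono μ).measurable.sub (quant_mono ν).measurable).abs.aestronglyMeasurable),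
      integral_eq_lintegral_of_nonneg_ae (f := fun t => |cdf μ t - cdf ν t|) (ae_of_all _ fun t => abs_nonneg _)
        (((monotone_cdf μ).measurable.sub (monotone_cdf ν).measurable).abs.aestronglyMeasurable),
      lintegral_abs_quant_sub hμ hν]
  have hRHS : (∫ t in (0:ℝ)..1, |(μ (Set.Ioc t 1)).toReal - (ν (Set.Ioc t 1)).toReal| ^ p)
      = ∫ t in Ioo (0:ℝ) 1, |cdf μ t - cdf ν t| ^ p := by
    rw [intervalIntegral.integral_of_le zero_le_one,
      ← Measure.restrict_congr_set Ioo_ae_eq_Ioc]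
    refine setIntegral_congr_fun measurableSet_Ioo (fun t ht => ?_)
    rw [toReal_Ioc hμ ht.2.le, toReal_Ioc hν ht.2.le,
      show (1 - cdf μ t) - (1 - cdf ν t) = -(cdf μ t - cdf ν t) by ring, abs_neg]
  rw [hcost, hbridge, hRHS]
  refine int_le_rpow (g := fun t => |cdf μ t - cdf ν t|) (((monotone_cdf μ).measurable.sub (monotone_cdf ν).measurable).abs)
    (fun t => abs_nonneg _) (fun t => ?_) hp
  have h1 := cdf_le_one μ t
  have h2 := cdf_le_one ν t
  have h3 := cdf_nonneg μ t
  have h4 := cdf_nonneg ν t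
  rw [abs_le]
  constructor <;> linarith
end
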